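/- arXiv:1606.09342 — 10 statements merged into one kernel-verified Lean document; each statement's English description precedes it below -/
import Mathlib

section
/- The core-EP decomposition of a square complex matrix is unique: if A = A₁ + A₂ = B₁ + B₂ with A₁, B₁ group-invertible, A₂^k = B₂^k = 0 (k = Ind(A)), A₁*A₂ = A₂A₁ = 0 and B₁*B₂ = B₂B₁ = 0, then A₁ = B₁ and A₂ = B₂. -/
open Matrix

namespace CoreEP

variable {I : Type*} [Fintype I] [DecidableEq I]

/-- `X` is the Moore-Penrose inverse of `A` (four Penrose equations). -/
def IsMPInv (A X : Matrix I I ℂ) : Prop :=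
  A * X * A = A ∧ X * A * X = X ∧ (A * X)ᴴ = A * X ∧ (X * A)ᴴ = X * A

/-- The column space of `X` is contained in the column space of `A`. -/
def rangeLE (X A : Matrix I I ℂ) : Prop :=
  LinearMap.range X.mulVecLin ≤ LinearMap.range A.mulVecLin

/-- `A` is group-invertible (index at most one): `rank (A²) = rank A`. -/
def GroupInvertible (A : Matrix I I ℂ) : Prop :=
  (A ^ 2).rank = A.rank

/-- `X` is the core inverse of `A`: `A X = A A†` and `range X ⊆ range A`. -/
def IsCoreInv (A X : Matrix I I ℂ) : Prop :=
  (∃ D, IsMPInv A D ∧ A * X = A * D) ∧ rangeLE X A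

/-- `X` is the core-EP inverse of `A` with index `k`. -/
def IsCoreEPInv (A X : Matrix I I ℂ) (k : ℕ) : Prop :=
  X * A ^ (k + 1) = A ^ k ∧ X * A * X = X ∧ (A * X)ᴴ = A * X ∧ rangeLE X (A ^ k)

/-- `k` is the index of `A`: the smallest `k` with `rank A^(k+1) = rank A^k`. -/
def HasIndex (A : Matrix I I ℂ) (k : ℕ) : Prop :=
  (A ^ (k + 1)).rank = (A ^ k).rank ∧ ∀ j, (A ^ (j + 1)).rank = (A ^ j).rank → k ≤ j

/-- `A = A₁ + A₂` is a core-EP decomposition with nilpotency exponent `k`. -/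
def IsCoreEPDecomp (A A₁ A₂ : Matrix I I ℂ) (k : ℕ) : Prop :=
  A = A₁ + A₂ ∧ GroupInvertible A₁ ∧ A₂ ^ k = 0 ∧ A₁ᴴ * A₂ = 0 ∧ A₂ * A₁ = 0

/-- The core-EP (pre-)order: `A^⊕ₑ A = A^⊕ₑ B` and `A A^⊕ₑ = B A^⊕ₑ`. -/
def CoreEPLE (A B : Matrix I I ℂ) : Prop :=
  ∃ k X, HasIndex A k ∧ IsCoreEPInv A X k ∧ X * A = X * B ∧ A * X = B * X

/-- The core partial order on group-invertible matrices. -/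
def CoreLE (A B : Matrix I I ℂ) : Prop :=
  GroupInvertible A ∧ GroupInvertible B ∧ ∃ X, IsCoreInv A X ∧ X * A = X * B ∧ A * X = B * X

/-- The minus partial order: `rank (B - A) = rank B - rank A`. -/
def MinusLE (A B : Matrix I I ℂ) : Prop :=
  (B - A).rank + A.rank = B.rank

/-- The core-minus order: core order on the group-invertible parts and
minus order on the nilpotent parts of the core-EP decompositions. -/
def CMLE (A B : Matrix I I ℂ) : Prop :=
  ∃ k l A₁ A₂ B₁ B₂, HasIndex A k ∧ HasIndex B l ∧
    IsCoreEPDecomp A A₁ A₂ k ∧ IsCoreEPDecomp B B₁ B₂ l ∧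
    CoreLE A₁ B₁ ∧ MinusLE A₂ B₂

/-- Factorization from range inclusion. -/
lemma exists_mul_eq_of_range_le {n : ℕ} {X Y : Matrix (Fin n) (Fin n) ℂ}
    (h : LinearMap.range X.mulVecLin ≤ LinearMap.range Y.mulVecLin) :
    ∃ C, X = Y * C := by
  have hcol : ∀ j, ∃ c, Y.mulVec c = fun i => X i j := by
    intro j
    have : (fun i => X i j) ∈ LinearMap.range Y.mulVecLin := by
      apply h
      exact ⟨Pi.single j 1, by simp [Matrix.mulVecLin_apply, Matrix.mulVec_single]; rfl⟩
    exact this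
  choose c hc using hcol
  refine ⟨Matrix.of fun i j => c j i, ?_⟩
  ext i j
  have := congrFun (hc j) i
  simpa [Matrix.mul_apply, Matrix.mulVec, dotProduct] using this.symm

/-- For a group-invertible matrix, range of every positive power equals the range. -/
lemma range_pow_of_groupInvertible {n : ℕ} {M : Matrix (Fin n) (Fin n) ℂ}
    (h : GroupInvertible M) (j : ℕ) :
    LinearMap.range (M ^ (j + 1)).mulVecLin = LinearMap.range M.mulVecLin := by
  have hsq : LinearMap.range (M ^ 2).mulVecLin = LinearMap.range M.mulVecLin := by
    apply Submodule.eq_of_le_of_finrank_eq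
    · rw [pow_two, Matrix.mulVecLin_mul]
      exact LinearMap.range_comp_le_range _ _
    · exact h
  induction j with
  | zero => simp
  | succ j ih =>
    rw [pow_succ' M (j + 1), Matrix.mulVecLin_mul, LinearMap.range_comp, ih,
      ← LinearMap.range_comp, ← Matrix.mulVecLin_mul, ← pow_two, hsq]

/-- The range of the group part equals range of A^k. -/
lemma range_part_eq {n : ℕ} {A A₁ A₂ : Matrix (Fin n) (Fin n) ℂ} {m : ℕ}
    (hsum : A = A₁ + A₂) (hgi : GroupInvertible A₁) (hnil : A₂ ^ (m + 1) = 0)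
    (hza : A₂ * A₁ = 0) :
    LinearMap.range A₁.mulVecLin = LinearMap.range (A ^ (m + 1)).mulVecLin := by
  have hz : ∀ i, A₂ ^ (i + 1) * A₁ = 0 := fun i => by
    rw [pow_succ, mul_assoc, hza, mul_zero]
  -- A₂ * A ^ j = A₂ ^ (j + 1)
  have h1 : ∀ j, A₂ * A ^ j = A₂ ^ (j + 1) := by
    intro j
    induction j with
    | zero => simp
    | succ j ih =>
      rw [pow_succ, ← mul_assoc, ih, hsum, mul_add, hz, zero_add, ← pow_succ]
  -- A ^ (m+1) = A₁ * A ^ m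
  have h2 : A ^ (m + 1) = A₁ * A ^ m := by
    rw [pow_succ']
    nth_rewrite 1 [hsum]
    rw [add_mul, h1, hnil, add_zero]
  -- A ^ j * A₁ = A₁ ^ (j + 1)
  have h3 : ∀ j, A ^ j * A₁ = A₁ ^ (j + 1) := by
    intro j
    induction j with
    | zero => simp
    | succ j ih =>
      have hz2 : A₂ * A₁ ^ (j + 1) = 0 := by
        rw [pow_succ', ← mul_assoc, hza, zero_mul]
      rw [pow_succ', mul_assoc, ih]
      nth_rewrite 1 [hsum]
      rw [add_mul, hz2, add_zero, ← pow_succ']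
  apply le_antisymm
  · rw [← range_pow_of_groupInvertible hgi (m + 1), ← h3 (m + 1),
      Matrix.mulVecLin_mul]
    exact LinearMap.range_comp_le_range _ _
  · rw [h2, Matrix.mulVecLin_mul]
    exact LinearMap.range_comp_le_range _ _

/-- Uniqueness of the core-EP decomposition. -/
theorem core_ep_decomposition_unique {n : ℕ} (A A₁ A₂ B₁ B₂ : Matrix (Fin n) (Fin n) ℂ)
    (k : ℕ) (hk : HasIndex A k)
    (hA : IsCoreEPDecomp A A₁ A₂ k) (hB : IsCoreEPDecomp A B₁ B₂ k) :
    A₁ = B₁ ∧ A₂ = B₂ := by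
  obtain ⟨hAsum, hAgi, hAnil, hAorth, hAza⟩ := hA
  obtain ⟨hBsum, hBgi, hBnil, hBorth, hBza⟩ := hB
  rcases k with _ | m
  · -- k = 0 : then 1 = 0 and everything is zero
    have h1 : (1 : Matrix (Fin n) (Fin n) ℂ) = 0 := by simpa using hAnil
    have hz : ∀ M : Matrix (Fin n) (Fin n) ℂ, M = 0 := fun M => by
      calc M = M * 1 := (mul_one M).symm
      _ = 0 := by rw [h1, mul_zero]
    exact ⟨(hz A₁).trans (hz B₁).symm, (hz A₂).trans (hz B₂).symm⟩
  · have hr : LinearMap.range A₁.mulVecLin = LinearMap.range B₁.mulVecLin := by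
      rw [range_part_eq hAsum hAgi hAnil hAza, range_part_eq hBsum hBgi hBnil hBza]
    obtain ⟨C, hC⟩ := exists_mul_eq_of_range_le hr.le
    obtain ⟨D, hD⟩ := exists_mul_eq_of_range_le hr.ge
    -- A₁ᴴ * B₂ = 0 and B₁ᴴ * A₂ = 0
    have hAB : A₁ᴴ * B₂ = 0 := by
      rw [hC, Matrix.conjTranspose_mul, mul_assoc, hBorth, mul_zero]
    have hBA : B₁ᴴ * A₂ = 0 := by
      rw [hD, Matrix.conjTranspose_mul, mul_assoc, hAorth, mul_zero]
    have hdiff : A₁ - B₁ = B₂ - A₂ := by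
      have := hAsum.symm.trans hBsum
      linear_combination (norm := abel) this -- A₁ + A₂ = B₁ + B₂
    have key : (A₁ - B₁)ᴴ * (A₁ - B₁) = 0 := by
      nth_rewrite 2 [hdiff]
      rw [Matrix.conjTranspose_sub, sub_mul, mul_sub, mul_sub, hAB, hAorth,
        hBorth, hBA]
      simp
    have h0 : A₁ - B₁ = 0 := by
      open ComplexOrder in exact Matrix.conjTranspose_mul_self_eq_zero.mp key
    have h1 : A₁ = B₁ := sub_eq_zero.mp h0
    refine ⟨h1, ?_⟩
    have : A₁ + A₂ = B₁ + B₂ := hAsum.symm.trans hBsum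
    rw [h1] at this
    exact add_left_cancel this
end CoreEP
end

section
/- If A = A₁ + A₂ is the core-EP decomposition of A ∈ ℂ^{n×n} with Ind(A) = k, then A₁ = A^k (A^k)^⊕ A and A₂ = A − A^k (A^k)^⊕ A, where (A^k)^⊕ denotes the core inverse of A^k. -/
open Matrix

namespace CoreEP

variable {I : Type*} [Fintype I] [DecidableEq I]

/-- Factorization from range inclusion. -/
lemma exists_factor {X A : Matrix I I ℂ}
    (h : LinearMap.range X.mulVecLin ≤ LinearMap.range A.mulVecLin) :
    ∃ W, X = A * W := by
  have h' : ∀ j : I, ∃ v, A *ᵥ v = fun i => X i j := by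
    intro j
    have hx : (fun i => X i j) ∈ LinearMap.range X.mulVecLin := by
      refine ⟨Pi.single j 1, ?_⟩
      show X *ᵥ Pi.single j 1 = _
      ext i
      simp [Matrix.mulVec, dotProduct, Pi.single_apply]
    exact h hx
  refine ⟨Matrix.of fun i j => (h' j).choose i, ?_⟩
  ext i j
  have := congrFun (h' j).choose_spec i
  simpa [Matrix.mul_apply, Matrix.mulVec, dotProduct] using this.symm

lemma range_pow_eq {B : Matrix I I ℂ} (hgi : GroupInvertible B) (j : ℕ) :
    LinearMap.range (B ^ (j + 1)).mulVecLin = LinearMap.range B.mulVecLin := by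
  have hsq : LinearMap.range (B * B).mulVecLin = LinearMap.range B.mulVecLin := by
    refine Submodule.eq_of_le_of_finrank_le ?_ ?_
    · rw [Matrix.mulVecLin_mul]
      exact LinearMap.range_comp_le_range _ _
    · have : (B ^ 2).rank = B.rank := hgi
      rw [pow_two] at this
      exact le_of_eq this.symm
  induction j with
  | zero => simp
  | succ m ih =>
      rw [pow_succ' B (m + 1), Matrix.mulVecLin_mul, LinearMap.range_comp, ih,
        ← LinearMap.range_comp, ← Matrix.mulVecLin_mul, hsq]

/-- The core-EP decomposition is given by `A₁ = A^k (A^k)^⊕ A` and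
`A₂ = A - A^k (A^k)^⊕ A`. -/
theorem core_ep_parts_formula {n : ℕ} (A A₁ A₂ X : Matrix (Fin n) (Fin n) ℂ) (k : ℕ)
    (hk : HasIndex A k) (hdec : IsCoreEPDecomp A A₁ A₂ k)
    (hX : IsCoreInv (A ^ k) X) :
    A₁ = A ^ k * X * A ∧ A₂ = A - A ^ k * X * A := by
  obtain ⟨hsum, hgi, hnil, horth, hzero⟩ := hdec
  obtain ⟨⟨D, ⟨hD1, hD2, hD3, hD4⟩, hXD⟩, hrX⟩ := hX
  rcases k with _ | m
  · -- k = 0 : A₂ ^ 0 = 0 forces the matrix ring to be trivial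
    have h1 : (1 : Matrix (Fin n) (Fin n) ℂ) = 0 := by simpa using hnil
    have hall : ∀ M : Matrix (Fin n) (Fin n) ℂ, M = 0 := fun M => by
      calc M = M * 1 := (mul_one M).symm
        _ = 0 := by rw [h1, mul_zero]
    constructor
    · rw [hall A₁, hall (A ^ 0 * X * A)]
    · rw [hall A₂, hall (A - A ^ 0 * X * A)]
  · set k := m + 1 with hkdef
    -- A₂ * A ^ j = A₂ ^ (j + 1)
    have hA2pow : ∀ j, A₂ * A ^ j = A₂ ^ (j + 1) := by
      intro j
      induction j with
      | zero => simp
      | succ p ih =>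
          have : A₂ * A ^ (p + 1) = A₂ * A ^ p * A := by rw [pow_succ, ← mul_assoc]
          rw [this, ih, hsum, mul_add,
            show A₂ ^ (p + 1) * A₁ = A₂ ^ p * (A₂ * A₁) by rw [pow_succ, mul_assoc],
            hzero, mul_zero, zero_add, ← pow_succ]
    -- A ^ j * A₁ = A₁ ^ (j + 1)
    have hA1pow : ∀ j, A ^ j * A₁ = A₁ ^ (j + 1) := by
      intro j
      induction j with
      | zero => simp
      | succ p ih =>
          rw [pow_succ', mul_assoc, ih, hsum, add_mul, ← pow_succ',
            show A₂ * A₁ ^ (p + 1) = (A₂ * A₁) * A₁ ^ p by rw [pow_succ', ← mul_assoc],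
            hzero, zero_mul, add_zero]
    -- A ^ k = A₁ * A ^ m
    have hfac : A ^ k = A₁ * A ^ m := by
      have : A ^ k = A * A ^ m := by rw [hkdef, pow_succ']
      rw [this]
      nth_rewrite 1 [hsum]
      rw [add_mul, hA2pow m, ← hkdef, hnil, add_zero]
    -- range A₁ ≤ range (A ^ k), hence A₁ = A ^ k * C
    have hrA1 : LinearMap.range A₁.mulVecLin ≤ LinearMap.range (A ^ k).mulVecLin := by
      have h1 : LinearMap.range A₁.mulVecLin
          = LinearMap.range (A₁ ^ (k + 1)).mulVecLin := (range_pow_eq hgi k).symm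
      have h2 : A₁ ^ (k + 1) = A ^ k * A₁ := (hA1pow k).symm
      rw [h1, h2, Matrix.mulVecLin_mul]
      exact LinearMap.range_comp_le_range _ _
    obtain ⟨C, hC⟩ := exists_factor hrA1
    -- the projector P = A ^ k * D
    set P := A ^ k * D with hPdef
    have hPA1 : P * A₁ = A₁ := by
      rw [hC, hPdef, ← mul_assoc, mul_assoc (A ^ k) D (A ^ k), ← mul_assoc (A ^ k), hD1]
    have hPA2 : P * A₂ = 0 := by
      have hPfac : P = A₁ * (A ^ m * D) := by rw [hPdef, hfac, mul_assoc]
      have h2 : A₂ᴴ * P = 0 := by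
        rw [hPfac, ← mul_assoc,
          show A₂ᴴ * A₁ = (A₁ᴴ * A₂)ᴴ by rw [conjTranspose_mul, conjTranspose_conjTranspose],
          horth]
        simp
      have hPH : Pᴴ = P := hD3
      calc P * A₂ = (A₂ᴴ * Pᴴ)ᴴ := by
            rw [conjTranspose_mul, conjTranspose_conjTranspose, conjTranspose_conjTranspose]
        _ = 0 := by rw [hPH, h2, conjTranspose_zero]
    have key : A ^ k * X * A = A₁ := by
      rw [hXD, hsum, mul_add, hPA1, hPA2, add_zero]
    refine ⟨key.symm, ?_⟩
    rw [key, hsum]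
    abel

end CoreEP
end

section
/- If A = A₁ + A₂ is the core-EP decomposition of A, then there exists a unitary matrix U such that A₁ = U [[T, S],[0,0]] U* and A₂ = U [[0,0],[0,N]] U*, where T is nonsingular and N is nilpotent. -/
open Matrix Module
open scoped InnerProductSpace


namespace CoreEP

lemma exists_orthonormal_decomp {E : Type*} [NormedAddCommGroup E] [InnerProductSpace ℂ E]
    [FiniteDimensional ℂ E] (V : Submodule ℂ E) :
    ∃ B : Fin (finrank ℂ V) ⊕ Fin (finrank ℂ Vᗮ) → E,
      Orthonormal ℂ B ∧ (∀ i, B (Sum.inl i) ∈ V) ∧ ∀ j, B (Sum.inr j) ∈ Vᗮ := by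
  classical
  let bV := stdOrthonormalBasis ℂ V
  let bW := stdOrthonormalBasis ℂ Vᗮ
  refine ⟨Sum.elim (fun i => (bV i : E)) fun j => (bW j : E), ?_, fun i => (bV i).2,
    fun j => (bW j).2⟩
  rw [orthonormal_iff_ite]
  rintro (i | i) (j | j)
  · simpa [← Submodule.coe_inner] using orthonormal_iff_ite.mp bV.orthonormal i j
  · simpa using Submodule.inner_right_of_mem_orthogonal (bV i).2 (bW j).2
  · simpa using Submodule.inner_left_of_mem_orthogonal (bV j).2 (bW i).2
  · simpa [← Submodule.coe_inner] using orthonormal_iff_ite.mp bW.orthonormal i j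

lemma rank_eq_card_isUnit_det {r : ℕ} (T : Matrix (Fin r) (Fin r) ℂ) (h : T.rank = r) :
    IsUnit T.det := by
  rw [← Matrix.isUnit_iff_isUnit_det, ← Matrix.mulVec_surjective_iff_isUnit]
  have : LinearMap.range T.mulVecLin = ⊤ := by
    apply Submodule.eq_top_of_finrank_eq
    rw [← Matrix.rank, h]; simp [Module.finrank_fintype_fun_eq_card]
  intro v
  obtain ⟨y, hy⟩ := LinearMap.range_eq_top.mp this v
  exact ⟨y, hy⟩

lemma fromBlocks_pow_succ {r s : ℕ} (N : Matrix (Fin s) (Fin s) ℂ) (m : ℕ) :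
    (fromBlocks (0 : Matrix (Fin r) (Fin r) ℂ) 0 0 N) ^ (m + 1) =
      fromBlocks 0 0 0 (N ^ (m + 1)) := by
  induction m with
  | zero => simp [pow_one]
  | succ m ih => rw [pow_succ, ih, pow_succ, fromBlocks_multiply]; simp [← pow_succ]


variable {I : Type*} [Fintype I] [DecidableEq I]

/-- Block form of the core-EP decomposition: there is a unitary `U` with
`A₁ = U [[T,S],[0,0]] Uᴴ` and `A₂ = U [[0,0],[0,N]] Uᴴ`, `T` nonsingular, `N` nilpotent. -/
theorem core_ep_decomposition_block_form {n : ℕ} (A A₁ A₂ : Matrix (Fin n) (Fin n) ℂ)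
    (k : ℕ) (hk : HasIndex A k) (hdec : IsCoreEPDecomp A A₁ A₂ k) :
    ∃ (r s : ℕ) (e : Fin n ≃ (Fin r ⊕ Fin s)) (U : Matrix (Fin n) (Fin n) ℂ)
      (T : Matrix (Fin r) (Fin r) ℂ) (S : Matrix (Fin r) (Fin s) ℂ)
      (N : Matrix (Fin s) (Fin s) ℂ),
      U ∈ Matrix.unitaryGroup (Fin n) ℂ ∧ IsUnit T.det ∧ IsNilpotent N ∧
      A₁ = U * (Matrix.fromBlocks T S 0 0).submatrix e e * Uᴴ ∧
      A₂ = U * (Matrix.fromBlocks 0 0 0 N).submatrix e e * Uᴴ := by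
  obtain ⟨-, hGI, hNil, hOrth, hZero⟩ := hdec
  rw [GroupInvertible] at hGI
  classical
  let e₂ : (Fin n → ℂ) ≃ₗ[ℂ] EuclideanSpace ℂ (Fin n) := (WithLp.linearEquiv 2 ℂ _).symm
  have he₂ : ∀ (x : Fin n → ℂ) (i : Fin n), (e₂ x) i = x i := fun _ _ => rfl
  set V : Submodule ℂ (EuclideanSpace ℂ (Fin n)) :=
    (LinearMap.range A₁.mulVecLin).map (e₂ : (Fin n → ℂ) →ₗ[ℂ] EuclideanSpace ℂ (Fin n)) with hVdef
  set r := finrank ℂ V with hrdef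
  set s := finrank ℂ Vᗮ with hsdef
  have hrankA₁ : A₁.rank = r := by
    rw [hrdef, hVdef]
    exact (LinearEquiv.finrank_map_eq e₂ _).symm
  have hrs : n = r + s := by
    rw [hrdef, hsdef, V.finrank_add_finrank_orthogonal]
    simp
  obtain ⟨B, hBon, hBV, hBW⟩ := exists_orthonormal_decomp V
  -- dot-product form of orthonormality
  have hBd : ∀ a b, (∑ i, (starRingEnd ℂ) (B a i) * B b i) = if a = b then (1:ℂ) else 0 := by
    intro a b
    have h := orthonormal_iff_ite.mp hBon a b
    rw [PiLp.inner_apply] at h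
    simpa [RCLike.inner_apply, mul_comm] using h
  let e : Fin n ≃ Fin r ⊕ Fin s := (finCongr hrs).trans finSumFinEquiv.symm
  let U : Matrix (Fin n) (Fin n) ℂ := Matrix.of fun i j => B (e j) i
  have hUcol : ∀ i j, U i j = B (e j) i := fun i j => rfl
  have hUU : Uᴴ * U = 1 := by
    ext a b
    have h := hBd (e a) (e b)
    rw [if_congr (EmbeddingLike.apply_eq_iff_eq e) rfl rfl] at h
    rw [Matrix.mul_apply, Matrix.one_apply, ← h]
    apply Finset.sum_congr rfl
    intro i _
    rw [Matrix.conjTranspose_apply, hUcol, hUcol, starRingEnd_apply]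
  have hUm : U ∈ Matrix.unitaryGroup (Fin n) ℂ := by
    rw [Matrix.mem_unitaryGroup_iff']; exact hUU
  have hUUH : U * Uᴴ = 1 := mul_eq_one_comm.mp hUU
  have hentry : ∀ (C : Matrix (Fin n) (Fin n) ℂ) (p q : Fin r ⊕ Fin s),
      (Uᴴ * C * U).submatrix e.symm e.symm p q
        = ∑ i, (starRingEnd ℂ) (B p i) * (C *ᵥ fun j => B q j) i := by
    intro C p q
    simp only [Matrix.submatrix_apply, Matrix.mul_apply, Matrix.conjTranspose_apply,
      Matrix.of_apply, U, Equiv.apply_symm_apply, Matrix.mulVec, dotProduct,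
      Finset.sum_mul, Finset.mul_sum, starRingEnd_apply]
    rw [Finset.sum_comm]
    exact Finset.sum_congr rfl fun i _ => Finset.sum_congr rfl fun j _ => by ring
  -- representation of the V-part columns
  have hBVrep : ∀ i : Fin r, ∃ y, (fun j => B (Sum.inl i) j) = A₁ *ᵥ y := by
    intro i
    obtain ⟨v, ⟨y, rfl⟩, hv⟩ := hBV i
    exact ⟨y, by funext j; rw [← hv]; rfl⟩
  -- orthogonality of the W-part to the range of A₁
  have hVperp : ∀ (p : Fin s) (x : Fin n → ℂ),
      (∑ i, (starRingEnd ℂ) (B (Sum.inr p) i) * (A₁ *ᵥ x) i) = 0 := by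
    intro p x
    have hmem : e₂ (A₁ *ᵥ x) ∈ V := ⟨A₁ *ᵥ x, ⟨x, rfl⟩, rfl⟩
    have h := Submodule.inner_left_of_mem_orthogonal hmem (hBW p)
    rw [PiLp.inner_apply] at h
    simpa [RCLike.inner_apply, he₂, mul_comm] using h
  -- the three zero-block facts
  have hA1row : ∀ (p : Fin s) q,
      (Uᴴ * A₁ * U).submatrix e.symm e.symm (Sum.inr p) q = 0 := by
    intro p q
    rw [hentry]
    exact hVperp p _
  have hA2row : ∀ (p : Fin r) q,
      (Uᴴ * A₂ * U).submatrix e.symm e.symm (Sum.inl p) q = 0 := by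
    intro p q
    rw [hentry]
    obtain ⟨y, hy⟩ := hBVrep p
    calc (∑ i, (starRingEnd ℂ) (B (Sum.inl p) i) * (A₂ *ᵥ fun j => B q j) i)
        = star (A₁ *ᵥ y) ⬝ᵥ (A₂ *ᵥ fun j => B q j) := by
          rw [dotProduct]
          exact Finset.sum_congr rfl fun i _ => by
            rw [Pi.star_apply, ← hy, starRingEnd_apply]
      _ = 0 := by
          rw [Matrix.star_mulVec, Matrix.dotProduct_mulVec, Matrix.vecMul_vecMul,
            ← Matrix.dotProduct_mulVec, hOrth]
          simp
  have hA2col : ∀ q (p : Fin r),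
      (Uᴴ * A₂ * U).submatrix e.symm e.symm q (Sum.inl p) = 0 := by
    intro q p
    rw [hentry]
    obtain ⟨y, hy⟩ := hBVrep p
    rw [hy, Matrix.mulVec_mulVec, hZero]
    simp
  -- block matrices
  set M₁ : Matrix (Fin r ⊕ Fin s) (Fin r ⊕ Fin s) ℂ :=
    (Uᴴ * A₁ * U).submatrix e.symm e.symm with hM₁def
  set M₂ : Matrix (Fin r ⊕ Fin s) (Fin r ⊕ Fin s) ℂ :=
    (Uᴴ * A₂ * U).submatrix e.symm e.symm with hM₂def
  set T := M₁.toBlocks₁₁ with hTdef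
  set S := M₁.toBlocks₁₂ with hSdef
  set N := M₂.toBlocks₂₂ with hNdef
  have hM₁ : M₁ = fromBlocks T S 0 0 := by
    ext (i | i) (j | j)
    · rfl
    · rfl
    · exact hA1row i (Sum.inl j)
    · exact hA1row i (Sum.inr j)
  have hM₂ : M₂ = fromBlocks 0 0 0 N := by
    ext (i | i) (j | j)
    · exact hA2row i (Sum.inl j)
    · exact hA2row i (Sum.inr j)
    · exact hA2col (Sum.inr i) j
    · rfl
  have hsub : ∀ C : Matrix (Fin n) (Fin n) ℂ,
      ((Uᴴ * C * U).submatrix e.symm e.symm).submatrix e e = Uᴴ * C * U := by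
    intro C
    rw [Matrix.submatrix_submatrix]
    have h1 : (e.symm ∘ e : Fin n → Fin n) = id := by
      funext i; simp
    rw [h1, Matrix.submatrix_id_id]
  have hconjC : ∀ C : Matrix (Fin n) (Fin n) ℂ, U * (Uᴴ * C * U) * Uᴴ = C := by
    intro C
    calc U * (Uᴴ * C * U) * Uᴴ = (U * Uᴴ) * (C * (U * Uᴴ)) := by
          simp only [Matrix.mul_assoc]
      _ = C := by rw [hUUH, Matrix.one_mul, Matrix.mul_one]
  have hA₁eq : A₁ = U * (fromBlocks T S 0 0).submatrix e e * Uᴴ := by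
    rw [← hM₁, hM₁def, hsub, hconjC]
  have hA₂eq : A₂ = U * (fromBlocks 0 0 0 N).submatrix e e * Uᴴ := by
    rw [← hM₂, hM₂def, hsub, hconjC]
  -- determinant facts
  have hUdet : IsUnit U.det := by
    apply IsUnit.of_mul_eq_one Uᴴ.det
    rw [← Matrix.det_mul, hUUH, Matrix.det_one]
  have hUHdet : IsUnit Uᴴ.det := by
    apply IsUnit.of_mul_eq_one U.det
    rw [← Matrix.det_mul, hUU, Matrix.det_one]
  have hconjrank : ∀ C : Matrix (Fin n) (Fin n) ℂ, (Uᴴ * C * U).rank = C.rank := by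
    intro C
    rw [Matrix.rank_mul_eq_left_of_isUnit_det U (Uᴴ * C) hUdet,
      Matrix.rank_mul_eq_right_of_isUnit_det Uᴴ C hUHdet]
  -- rank of T
  have hM₁sq : M₁ * M₁ = (Uᴴ * A₁ ^ 2 * U).submatrix e.symm e.symm := by
    rw [hM₁def, Matrix.submatrix_mul_equiv]
    rw [show Uᴴ * A₁ * U * (Uᴴ * A₁ * U) = Uᴴ * A₁ * (U * Uᴴ) * (A₁ * U) by
      simp only [Matrix.mul_assoc], hUUH, Matrix.mul_one, pow_two]
    simp only [Matrix.mul_assoc]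
  have hTrank : T.rank = r := by
    refine le_antisymm (le_trans T.rank_le_card_width (by simp)) ?_
    have hr1 : (M₁ * M₁).rank = r := by
      rw [hM₁sq, Matrix.rank_submatrix, hconjrank, hGI, hrankA₁]
    have hfact : M₁ * M₁ = fromBlocks T 0 0 0 * M₁ := by
      rw [hM₁, fromBlocks_multiply, fromBlocks_multiply]
      simp
    set J : Matrix (Fin r ⊕ Fin s) (Fin r) ℂ :=
      Matrix.of fun i j => Sum.elim (fun a => if a = j then (1 : ℂ) else 0) (fun _ => 0) i
      with hJdef
    set K : Matrix (Fin r) (Fin r ⊕ Fin s) ℂ :=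
      Matrix.of fun i j => Sum.elim (fun a => if i = a then (1 : ℂ) else 0) (fun _ => (0 : ℂ)) j
      with hKdef
    have hJK : J * (T * K) = fromBlocks T 0 0 0 := by
      ext (i | i) (j | j) <;>
        simp [hJdef, hKdef, Matrix.mul_apply, Finset.sum_ite_eq, Finset.sum_ite_eq',
          ite_mul, mul_ite]
    calc r = (M₁ * M₁).rank := hr1.symm
      _ ≤ (fromBlocks T 0 0 0).rank := by
          rw [hfact]; exact Matrix.rank_mul_le_left _ _
      _ = (J * (T * K)).rank := by rw [hJK]
      _ ≤ (T * K).rank := Matrix.rank_mul_le_right _ _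
      _ ≤ T.rank := Matrix.rank_mul_le_left _ _
  -- nilpotency of N
  have hconjpow : ∀ (C : Matrix (Fin n) (Fin n) ℂ) (m : ℕ),
      (Uᴴ * C * U) ^ m = Uᴴ * C ^ m * U := by
    intro C m
    induction m with
    | zero => rw [pow_zero, pow_zero, Matrix.mul_one, hUU]
    | succ m ih =>
      rw [pow_succ, ih, pow_succ,
        show Uᴴ * C ^ m * U * (Uᴴ * C * U) = Uᴴ * C ^ m * (U * Uᴴ) * (C * U) by
          simp only [Matrix.mul_assoc], hUUH, Matrix.mul_one]
      simp only [Matrix.mul_assoc]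
  have hsubpow : ∀ (C : Matrix (Fin n) (Fin n) ℂ) (m : ℕ),
      (C.submatrix e.symm e.symm) ^ m = (C ^ m).submatrix e.symm e.symm := by
    intro C m
    induction m with
    | zero => rw [pow_zero, pow_zero, Matrix.submatrix_one_equiv]
    | succ m ih => rw [pow_succ, ih, Matrix.submatrix_mul_equiv, ← pow_succ]
  have hNk : N ^ (k + 1) = 0 := by
    have h1 : M₂ ^ (k + 1) = 0 := by
      rw [hM₂def, hsubpow, hconjpow, pow_succ, hNil]
      simp
    rw [hM₂] at h1
    rw [fromBlocks_pow_succ] at h1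
    ext i j
    have h2 := congrFun (congrFun h1 (Sum.inr i)) (Sum.inr j)
    simpa using h2
  exact ⟨r, s, e, U, T, S, N, hUm, rank_eq_card_isUnit_det T hTrank, ⟨k + 1, hNk⟩,
    hA₁eq, hA₂eq⟩


end CoreEP
end

section
/- Let A ∈ ℂ^{n×n} with Ind(A) = k. Then A A^⊕ₑ = A^k (A^k)^⊕ = A^k (A^k)†, where A^⊕ₑ is the core-EP inverse of A. -/
open Matrix

namespace CoreEP

variable {I : Type*} [Fintype I] [DecidableEq I]

private lemma ext_mulVec {n : ℕ} {P Q : Matrix (Fin n) (Fin n) ℂ}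
    (h : ∀ v, P *ᵥ v = Q *ᵥ v) : P = Q := by
  ext i j
  have := congrFun (h (Pi.single j 1)) i
  simpa [Matrix.mulVec_single] using this

private lemma range_mul_le {n : ℕ} (P Q : Matrix (Fin n) (Fin n) ℂ) :
    LinearMap.range (P * Q).mulVecLin ≤ LinearMap.range P.mulVecLin := by
  rw [Matrix.mulVecLin_mul]
  exact LinearMap.range_comp_le_range _ _

private lemma proj_eq {n : ℕ} {P Q : Matrix (Fin n) (Fin n) ℂ}
    (hP : Pᴴ = P) (hQ : Qᴴ = Q) (hP2 : P * P = P) (hQ2 : Q * Q = Q)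
    (h : LinearMap.range P.mulVecLin = LinearMap.range Q.mulVecLin) : P = Q := by
  have fix : ∀ (R : Matrix (Fin n) (Fin n) ℂ), R * R = R →
      ∀ v ∈ LinearMap.range R.mulVecLin, R *ᵥ v = v := by
    rintro R hR _ ⟨w, rfl⟩
    show R *ᵥ (R *ᵥ w) = R *ᵥ w
    rw [Matrix.mulVec_mulVec, hR]
  have hQP : Q * P = P := by
    apply ext_mulVec; intro v
    rw [← Matrix.mulVec_mulVec]
    exact fix Q hQ2 _ (h ▸ ⟨v, rfl⟩)
  have hPQ : P * Q = Q := by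
    apply ext_mulVec; intro v
    rw [← Matrix.mulVec_mulVec]
    exact fix P hP2 _ (h ▸ ⟨v, rfl⟩)
  calc P = Pᴴ := hP.symm
    _ = (Q * P)ᴴ := by rw [hQP]
    _ = Pᴴ * Qᴴ := Matrix.conjTranspose_mul Q P
    _ = P * Q := by rw [hP, hQ]
    _ = Q := hPQ

/-- `A A^⊕ₑ = A^k (A^k)^⊕ = A^k (A^k)†`. -/
theorem mul_coreEP_inv_eq {n : ℕ} (A X Y D : Matrix (Fin n) (Fin n) ℂ) (k : ℕ)
    (hk : HasIndex A k) (hX : IsCoreEPInv A X k)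
    (hY : IsCoreInv (A ^ k) Y) (hD : IsMPInv (A ^ k) D) :
    A * X = A ^ k * Y ∧ A * X = A ^ k * D := by
  obtain ⟨h1, h2, h3, h4⟩ := hX
  obtain ⟨d1, d2, d3, d4⟩ := hD
  set B := A ^ k with hB
  -- range A^(k+1) = range A^k
  have hpow : A ^ (k + 1) = B * A := pow_succ A k
  have hpow' : A ^ (k + 1) = A * B := pow_succ' A k
  have hrange_pow : LinearMap.range (A ^ (k + 1)).mulVecLin
      = LinearMap.range B.mulVecLin := by
    refine Submodule.eq_of_le_of_finrank_eq ?_ hk.1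
    rw [hpow]; exact range_mul_le B A
  -- range (A*X) = range A^k
  have hAX_le : LinearMap.range (A * X).mulVecLin
      ≤ LinearMap.range (A ^ (k + 1)).mulVecLin := by
    rw [Matrix.mulVecLin_mul, LinearMap.range_comp, hpow', Matrix.mulVecLin_mul,
      LinearMap.range_comp]
    exact Submodule.map_mono h4
  have hle2 : LinearMap.range (A ^ (k + 1)).mulVecLin
      ≤ LinearMap.range (A * X).mulVecLin := by
    have : (A * X) * A ^ (k + 1) = A ^ (k + 1) := by
      rw [mul_assoc, h1, hpow']
    conv_lhs => rw [← this]
    exact range_mul_le _ _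
  have hrangeAX : LinearMap.range (A * X).mulVecLin = LinearMap.range B.mulVecLin :=
    le_antisymm (hAX_le.trans hrange_pow.le) (hrange_pow.symm.le.trans hle2)
  -- range (B*D) = range B
  have hrangeBD : LinearMap.range (B * D).mulVecLin = LinearMap.range B.mulVecLin := by
    refine le_antisymm (range_mul_le _ _) ?_
    conv_lhs => rw [← d1]
    exact range_mul_le _ _
  -- A * X = B * D via uniqueness of orthogonal projections
  have hmain : A * X = B * D := by
    refine proj_eq h3 d3 ?_ ?_ (hrangeAX.trans hrangeBD.symm)
    · calc A * X * (A * X) = A * (X * A * X) := by noncomm_ring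
        _ = A * X := by rw [h2]
    · calc B * D * (B * D) = (B * D * B) * D := by noncomm_ring
        _ = B * D := by rw [d1]
  -- the core inverse part
  obtain ⟨⟨D', hD', hYD'⟩, _⟩ := hY
  obtain ⟨e1, e2, e3, e4⟩ := hD'
  have hDD' : B * D = B * D' := by
    calc B * D = (B * D)ᴴ := d3.symm
      _ = Dᴴ * Bᴴ := Matrix.conjTranspose_mul B D
      _ = Dᴴ * (B * D' * B)ᴴ := by rw [e1]
      _ = Dᴴ * (Bᴴ * (B * D')ᴴ) := by
          rw [Matrix.conjTranspose_mul (B * D') B]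
      _ = Dᴴ * Bᴴ * (B * D') := by rw [e3, mul_assoc]
      _ = (B * D)ᴴ * (B * D') := by rw [Matrix.conjTranspose_mul B D]
      _ = (B * D * B) * D' := by rw [d3]; noncomm_ring
      _ = B * D' := by rw [d1]
  exact ⟨by rw [hmain, hYD', hDD'], hmain⟩

end CoreEP
end

section
/- Let A ∈ ℂ^{n×n} with Ind(A) = k and core-EP decomposition A = A₁ + A₂. Then A₁ = A A^⊕ₑ A and A₂ = A − A A^⊕ₑ A, where A^⊕ₑ is the core-EP inverse of A. -/
open Matrix

namespace CoreEP

variable {I : Type*} [Fintype I] [DecidableEq I]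

/-- Factorization from range inclusion: if `range X ⊆ range B` then `X = B Y`. -/
lemma exists_factor_of_rangeLE {X B : Matrix I I ℂ} (h : rangeLE X B) :
    ∃ Y : Matrix I I ℂ, X = B * Y := by
  set f := X.mulVecLin with hf
  set g := B.mulVecLin with hg
  obtain ⟨s, hs⟩ := g.rangeRestrict.exists_rightInverse_of_surjective
    (LinearMap.range_rangeRestrict g)
  set l : (I → ℂ) →ₗ[ℂ] (I → ℂ) :=
    s ∘ₗ (f.codRestrict (LinearMap.range g) (fun x => h ⟨x, rfl⟩)) with hl
  have hgl : ∀ x, g (l x) = f x := by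
    intro x
    have h1 : g.rangeRestrict (s ⟨f x, h ⟨x, rfl⟩⟩) = ⟨f x, h ⟨x, rfl⟩⟩ := by
      rw [← LinearMap.comp_apply, hs]; rfl
    have h2 := congrArg Subtype.val h1
    simpa [hl, LinearMap.codRestrict] using h2
  refine ⟨Matrix.of (fun i j => l (Pi.single j 1) i), ?_⟩
  ext i j
  have h3 : X.mulVec (Pi.single j 1) i = B.mulVec (l (Pi.single j 1)) i := by
    have := congrFun (hgl (Pi.single j 1)).symm i
    simpa [hf, hg, Matrix.mulVecLin_apply] using this
  rw [Matrix.mulVec_single] at h3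
  simp only [Pi.smul_apply, MulOpposite.op_one, one_smul, Matrix.col_apply] at h3
  rw [h3]
  simp [Matrix.mul_apply, Matrix.mulVec, dotProduct]

/-- The parts of the core-EP decomposition in terms of the core-EP inverse:
`A₁ = A A^⊕ₑ A` and `A₂ = A - A A^⊕ₑ A`. -/
theorem core_ep_parts_via_coreEP_inv {n : ℕ} (A A₁ A₂ X : Matrix (Fin n) (Fin n) ℂ)
    (k : ℕ) (hk : HasIndex A k) (hdec : IsCoreEPDecomp A A₁ A₂ k)
    (hX : IsCoreEPInv A X k) :
    A₁ = A * X * A ∧ A₂ = A - A * X * A := by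
  obtain ⟨hsum, hgi, hnil, horth, hzero⟩ := hdec
  obtain ⟨hX1, hX2, hX3, hX4⟩ := hX
  -- A₂ * A^j = A₂^(j+1)
  have hA2A : A₂ * A = A₂ ^ 2 := by
    rw [hsum, mul_add, hzero, zero_add, sq]
  have hA2pow : ∀ j, A₂ * A ^ j = A₂ ^ (j + 1) := by
    intro j
    induction j with
    | zero => simp
    | succ j ih =>
      calc A₂ * A ^ (j + 1) = A₂ * A ^ j * A := by rw [pow_succ, mul_assoc]
      _ = A₂ ^ j * (A₂ * A) := by rw [ih, pow_succ, mul_assoc]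
      _ = A₂ ^ j * A₂ ^ 2 := by rw [hA2A]
      _ = A₂ ^ (j + 1 + 1) := by rw [← pow_add]
  -- A₂ * X = 0
  obtain ⟨Y, hY⟩ := exists_factor_of_rangeLE hX4
  have hA2X : A₂ * X = 0 := by
    rw [hY, ← mul_assoc, hA2pow, pow_succ, hnil, zero_mul, zero_mul]
  -- P := A * X ; P * A₂ = 0
  have hPA2 : A * X * A₂ = 0 := by
    have : A * X * A₂ = (A * X)ᴴ * A₂ := by rw [hX3]
    rw [this, Matrix.conjTranspose_mul, mul_assoc]
    have hAH : Aᴴ * A₂ = A₂ᴴ * A₂ := by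
      rw [hsum, Matrix.conjTranspose_add, add_mul, horth, zero_add]
    rw [hAH, ← mul_assoc, ← Matrix.conjTranspose_mul, hA2X]
    simp
  -- A^j * A₁ = A₁^(j+1)
  have hAA1 : A * A₁ = A₁ ^ 2 := by
    rw [hsum, add_mul, hzero, add_zero, sq]
  have hApow : ∀ j, A ^ j * A₁ = A₁ ^ (j + 1) := by
    intro j
    induction j with
    | zero => simp
    | succ j ih =>
      calc A ^ (j + 1) * A₁ = A * (A ^ j * A₁) := by rw [pow_succ', mul_assoc]
      _ = A * A₁ * A₁ ^ j := by rw [ih, pow_succ', mul_assoc]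
      _ = A₁ ^ 2 * A₁ ^ j := by rw [hAA1]
      _ = A₁ ^ (j + 1 + 1) := by rw [← pow_add]; ring_nf
  -- A₁ = A₁^(j+1) * W by induction from group invertibility
  obtain ⟨V, hV⟩ : ∃ V, A₁ = A₁ ^ 2 * V := by
    apply exists_factor_of_rangeLE
    have hle : LinearMap.range (A₁ ^ 2).mulVecLin ≤ LinearMap.range A₁.mulVecLin := by
      rw [sq, Matrix.mulVecLin_mul]
      exact LinearMap.range_comp_le_range _ _
    have := Submodule.eq_of_le_of_finrank_le hle (le_of_eq hgi.symm)
    exact le_of_eq this.symm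
  have hWpow : ∀ j, ∃ W, A₁ = A₁ ^ (j + 1) * W := by
    intro j
    induction j with
    | zero => exact ⟨1, by simp⟩
    | succ j ih =>
      obtain ⟨W, hWj⟩ := ih
      refine ⟨V * W, ?_⟩
      calc A₁ = A₁ ^ (j + 1) * W := hWj
      _ = A₁ ^ j * A₁ * W := by rw [pow_succ]
      _ = A₁ ^ j * (A₁ ^ 2 * V) * W := by rw [← hV]
      _ = A₁ ^ (j + 1 + 1) * (V * W) := by
          simp only [← mul_assoc]; rw [← pow_add]
  obtain ⟨W, hW⟩ := hWpow (k + 1)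
  -- P * A^(k+1) = A^(k+1)
  have hPAk : A * X * A ^ (k + 1) = A ^ (k + 1) := by
    rw [mul_assoc, hX1, ← pow_succ']
  -- P * A₁ = A₁
  have hPA1 : A * X * A₁ = A₁ := by
    have h1 : A₁ = A ^ (k + 1) * (A₁ * W) := by
      rw [← mul_assoc, hApow, ← hW]
    calc A * X * A₁ = A * X * (A ^ (k + 1) * (A₁ * W)) := by rw [← h1]
    _ = (A * X * A ^ (k + 1)) * (A₁ * W) := by simp only [mul_assoc]
    _ = A ^ (k + 1) * (A₁ * W) := by rw [hPAk]
    _ = A₁ := h1.symm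
  have hmain : A * X * A = A₁ := by
    conv_lhs => rw [show A * X * A = A * X * A₁ + A * X * A₂ by rw [← mul_add, ← hsum]]
    rw [hPA1, hPA2, add_zero]
  exact ⟨hmain.symm, by rw [hmain, hsum]; abel⟩

end CoreEP
end

section
/- Let A ∈ ℂ^{n×n} with Ind(A) = k. Then the core-EP inverse satisfies A^⊕ₑ = A^k (A^{k+1})^⊕, where (A^{k+1})^⊕ is the core inverse of A^{k+1}. -/
open Matrix

namespace CoreEP

variable {I : Type*} [Fintype I] [DecidableEq I]

private lemma mulvec_ext' {n : ℕ} (M N : Matrix (Fin n) (Fin n) ℂ)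
    (h : ∀ v, M *ᵥ v = N *ᵥ v) : M = N := by
  ext i j
  have := congrFun (h (Pi.single j 1)) i
  simpa [mulVec_single] using this

private lemma idem_absorb' {n : ℕ} (M N : Matrix (Fin n) (Fin n) ℂ) (hM : M * M = M)
    (h : LinearMap.range N.mulVecLin ≤ LinearMap.range M.mulVecLin) : M * N = N := by
  apply mulvec_ext'
  intro v
  obtain ⟨u, hu⟩ := h ⟨v, rfl⟩
  simp only [mulVecLin_apply] at hu
  rw [← mulVec_mulVec, ← hu, mulVec_mulVec, hM, hu]

private lemma range_mul_le_left' {n : ℕ} (M N : Matrix (Fin n) (Fin n) ℂ) :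
    LinearMap.range (M * N).mulVecLin ≤ LinearMap.range M.mulVecLin := by
  rw [mulVecLin_mul]
  exact LinearMap.range_comp_le_range _ _

private lemma range_mul_mono' {n : ℕ} (M N K : Matrix (Fin n) (Fin n) ℂ)
    (h : LinearMap.range N.mulVecLin ≤ LinearMap.range K.mulVecLin) :
    LinearMap.range (M * N).mulVecLin ≤ LinearMap.range (M * K).mulVecLin := by
  rw [mulVecLin_mul, mulVecLin_mul, LinearMap.range_comp, LinearMap.range_comp]
  exact Submodule.map_mono h

/-- `A^⊕ₑ = A^k (A^{k+1})^⊕`. -/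
theorem coreEP_inv_eq_pow_mul_core_inv {n : ℕ} (A X Y : Matrix (Fin n) (Fin n) ℂ)
    (k : ℕ) (hk : HasIndex A k) (hX : IsCoreEPInv A X k)
    (hY : IsCoreInv (A ^ (k + 1)) Y) :
    X = A ^ k * Y := by
  obtain ⟨hXB, hXAX, hPH, hrX⟩ := hX
  obtain ⟨⟨D, ⟨hD1, hD2, hD3, hD4⟩, hBY⟩, hrY⟩ := hY
  set P := A * X with hPdef
  set Q := A ^ (k+1) * Y with hQdef
  have hP2 : P * P = P := by
    rw [hPdef, mul_assoc, ← mul_assoc X A X, hXAX]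
  have hQ2 : Q * Q = Q := by
    rw [hBY, mul_assoc, ← mul_assoc D, hD2]
  have hQH : Qᴴ = Q := by rw [hBY, hD3]
  have hPB : P * A ^ (k+1) = A ^ (k+1) := by
    rw [hPdef, mul_assoc, hXB, ← pow_succ']
  have hQB : Q * A ^ (k+1) = A ^ (k+1) := by
    rw [hBY, hD1]
  have hrBP : LinearMap.range (A ^ (k+1)).mulVecLin ≤ LinearMap.range P.mulVecLin := by
    conv_lhs => rw [← hPB]
    exact range_mul_le_left' _ _
  have hrBQ : LinearMap.range (A ^ (k+1)).mulVecLin ≤ LinearMap.range Q.mulVecLin := by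
    conv_lhs => rw [← hQB]
    exact range_mul_le_left' _ _
  have hrQB : LinearMap.range Q.mulVecLin ≤ LinearMap.range (A ^ (k+1)).mulVecLin :=
    range_mul_le_left' _ _
  have hrPB : LinearMap.range P.mulVecLin ≤ LinearMap.range (A ^ (k+1)).mulVecLin := by
    have := range_mul_mono' A X (A ^ k) hrX
    rwa [← pow_succ'] at this
  have hPQ : P * Q = Q := idem_absorb' _ _ hP2 (hrQB.trans hrBP)
  have hQP : Q * P = P := idem_absorb' _ _ hQ2 (hrPB.trans hrBQ)
  have hPeqQ : P = Q := by
    have h1 : (Q * P)ᴴ = Pᴴ * Qᴴ := conjTranspose_mul _ _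
    rw [hQP, hPH, hQH, hPQ] at h1
    exact h1
  calc X = X * A * X := hXAX.symm
    _ = X * P := by rw [hPdef, mul_assoc]
    _ = X * Q := by rw [hPeqQ]
    _ = X * A ^ (k+1) * Y := by rw [hQdef, ← mul_assoc]
    _ = A ^ k * Y := by rw [hXB]

end CoreEP
end

section
/- A ≤^⊕ₑ B holds if and only if A₁ ≤^⊕ B₁, where A = A₁ + A₂ and B = B₁ + B₂ are the core-EP decompositions of A and B. -/
open Matrix

namespace CoreEP

variable {I : Type*} [Fintype I] [DecidableEq I]

open scoped ComplexOrder

variable {n : ℕ}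

lemma rangeLE_of_factor (A C : Matrix (Fin n) (Fin n) ℂ) : rangeLE (A * C) A := by
  rw [rangeLE, Matrix.mulVecLin_mul]
  exact LinearMap.range_comp_le_range _ _

lemma exists_factor_s11 {X A : Matrix (Fin n) (Fin n) ℂ} (h : rangeLE X A) : ∃ C, X = A * C := by
  have hc : ∀ j, ∃ c : Fin n → ℂ, A.mulVec c = fun i => X i j := by
    intro j
    have hmem : (fun i => X i j) ∈ LinearMap.range A.mulVecLin := by
      apply h
      refine ⟨Pi.single j 1, ?_⟩
      simp [Matrix.mulVecLin_apply]
      rfl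
    exact hmem
  choose c hc using hc
  refine ⟨Matrix.of fun i j => c j i, ?_⟩
  ext i j
  have := congrFun (hc j) i
  simpa [Matrix.mulVec, Matrix.mul_apply, dotProduct] using this.symm

lemma range_eq_of_rangeLE {X A : Matrix (Fin n) (Fin n) ℂ} (h : rangeLE X A)
    (hr : A.rank ≤ X.rank) :
    LinearMap.range X.mulVecLin = LinearMap.range A.mulVecLin :=
  Submodule.eq_of_le_of_finrank_le h hr

lemma groupInv_aux (A H H' : Matrix (Fin n) (Fin n) ℂ)
    (c1 : A * H = H * A) (f1 : H * A * H = H)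
    (c2 : A * H' = H' * A) (e2 : A * H' * A = A) : H = A * H * H' := by
  have s1 : H = H * (H * A) := by
    conv_lhs => rw [← f1, mul_assoc, c1]
  calc H = H * (H * A) := s1
    _ = H * (H * (A * H' * A)) := by rw [e2]
    _ = H * (H * A) * (H' * A) := by simp only [mul_assoc]
    _ = H * (H' * A) := by rw [← s1]
    _ = H * (A * H') := by rw [c2]
    _ = H * A * H' := by simp only [mul_assoc]
    _ = A * H * H' := by rw [← c1]

lemma groupInv_unique {A G G' : Matrix (Fin n) (Fin n) ℂ}
    (c1 : A * G = G * A) (e1 : A * G * A = A) (f1 : G * A * G = G)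
    (c2 : A * G' = G' * A) (e2 : A * G' * A = A) (f2 : G' * A * G' = G') : G = G' := by
  have s2 : G = A * G * G' := groupInv_aux A G G' c1 f1 c2 e2
  have s2' : G' = A * G' * G := groupInv_aux A G' G c2 f2 c1 e1
  have hE'E : A * G' * (A * G) = A * G := by
    calc A * G' * (A * G) = A * G' * A * G := by simp only [mul_assoc]
      _ = A * G := by rw [e2]
  calc G = A * G * G' := s2
    _ = A * G' * (A * G) * G' := by conv_lhs => rw [← hE'E]
    _ = A * G' * (A * G * G') := by simp only [mul_assoc]
    _ = A * G' * G := by rw [← s2]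
    _ = G' := s2'.symm

lemma exists_groupInv {A : Matrix (Fin n) (Fin n) ℂ} (h : GroupInvertible A) :
    ∃ G, A * G = G * A ∧ A * G * A = A ∧ G * A * G = G := by
  have hr : (A * A).rank = A.rank := by rw [← pow_two]; exact h
  have heq := range_eq_of_rangeLE (rangeLE_of_factor A A) hr.ge
  obtain ⟨C, hC⟩ : ∃ C, A = A * A * C := exists_factor_s11 (le_of_eq heq.symm)
  have hr' : (Aᴴ * Aᴴ).rank = Aᴴ.rank := by
    rw [← conjTranspose_mul, rank_conjTranspose, rank_conjTranspose, hr]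
  have heq' := range_eq_of_rangeLE (rangeLE_of_factor Aᴴ Aᴴ) hr'.ge
  obtain ⟨C0, hC0⟩ : ∃ C0, Aᴴ = Aᴴ * Aᴴ * C0 := exists_factor_s11 (le_of_eq heq'.symm)
  have hC' : A = C0ᴴ * (A * A) := by
    have h2 := congrArg conjTranspose hC0
    simpa only [conjTranspose_mul, conjTranspose_conjTranspose, mul_assoc] using h2
  set C' : Matrix (Fin n) (Fin n) ℂ := C0ᴴ with hC'def
  have hE : A * C = C' * A := by
    conv_lhs => rw [hC']
    conv_rhs => rw [hC]
    simp only [mul_assoc]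
  have hAE : A * (A * C) = A := by
    conv_rhs => rw [hC]
    simp only [mul_assoc]
  have hACA : A * C * A = A := by
    rw [hE, mul_assoc]
    conv_rhs => rw [hC']
  have hAG : A * (C' * A * C) = A * C := by
    calc A * (C' * A * C) = A * (A * C * C) := by rw [← hE]
      _ = A * (A * C) * C := by simp only [mul_assoc]
      _ = A * C := by rw [hAE]
  have hGA : C' * A * C * A = A * C := by
    calc C' * A * C * A = C' * (A * C * A) := by simp only [mul_assoc]
      _ = C' * A := by rw [hACA]
      _ = A * C := hE.symm
  refine ⟨C' * A * C, hAG.trans hGA.symm, ?_, ?_⟩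
  · rw [hAG, hACA]
  · have st1 : C' * A * C * A * (C' * A * C) = C' * A * C * (A * (C' * A * C)) := by
      simp only [mul_assoc]
    have st3 : C' * A * C * (A * C) = C' * (A * C * A) * C := by simp only [mul_assoc]
    rw [st1, hAG, st3, hACA]

lemma MPInv_unique {A D1 D2 : Matrix (Fin n) (Fin n) ℂ} (h1 : IsMPInv A D1)
    (h2 : IsMPInv A D2) : D1 = D2 := by
  obtain ⟨a1, b1, c1, d1⟩ := h1
  obtain ⟨a2, b2, c2, d2⟩ := h2
  have hAD : A * D1 = A * D2 := by
    calc A * D1 = (A * D1)ᴴ := c1.symm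
      _ = (A * D2 * A * D1)ᴴ := by rw [a2]
      _ = (A * D2 * (A * D1))ᴴ := by simp only [mul_assoc]
      _ = (A * D1)ᴴ * (A * D2)ᴴ := by rw [conjTranspose_mul]
      _ = A * D1 * (A * D2) := by rw [c1, c2]
      _ = A * D1 * A * D2 := by simp only [mul_assoc]
      _ = A * D2 := by rw [a1]
  have hDA : D1 * A = D2 * A := by
    calc D1 * A = (D1 * A)ᴴ := d1.symm
      _ = (D1 * (A * D2 * A))ᴴ := by rw [a2]
      _ = (D1 * A * (D2 * A))ᴴ := by simp only [mul_assoc]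
      _ = (D2 * A)ᴴ * (D1 * A)ᴴ := by rw [conjTranspose_mul]
      _ = D2 * A * (D1 * A) := by rw [d1, d2]
      _ = D2 * (A * D1 * A) := by simp only [mul_assoc]
      _ = D2 * A := by rw [a1]
  calc D1 = D1 * A * D1 := b1.symm
    _ = D2 * A * D1 := by rw [hDA]
    _ = D2 * (A * D1) := by simp only [mul_assoc]
    _ = D2 * (A * D2) := by rw [hAD]
    _ = D2 * A * D2 := by simp only [mul_assoc]
    _ = D2 := b2

lemma exists_MPInv (A : Matrix (Fin n) (Fin n) ℂ) : ∃ D, IsMPInv A D := by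
  have hh : (Aᴴ * A)ᴴ = Aᴴ * A := by rw [conjTranspose_mul, conjTranspose_conjTranspose]
  have hB : GroupInvertible (Aᴴ * A) := by
    unfold GroupInvertible
    rw [pow_two, show Aᴴ * A * (Aᴴ * A) = (Aᴴ * A)ᴴ * (Aᴴ * A) from by rw [hh]]
    exact rank_conjTranspose_mul_self _
  obtain ⟨G, c, e, f⟩ := exists_groupInv hB
  have hGh : Gᴴ = G := by
    refine groupInv_unique (A := Aᴴ * A) ?_ ?_ ?_ c e f
    · have h3 := congrArg conjTranspose c
      simp only [conjTranspose_mul, conjTranspose_conjTranspose] at h3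
      simpa only [mul_assoc] using h3.symm
    · have h3 := congrArg conjTranspose e
      simp only [conjTranspose_mul, conjTranspose_conjTranspose] at h3
      simpa only [mul_assoc] using h3
    · have h3 := congrArg conjTranspose f
      simp only [conjTranspose_mul, conjTranspose_conjTranspose] at h3
      simpa only [mul_assoc] using h3
  have hBE : Aᴴ * A * (Aᴴ * A * G) = Aᴴ * A := by
    calc Aᴴ * A * (Aᴴ * A * G) = Aᴴ * A * (G * (Aᴴ * A)) := by rw [c]
      _ = Aᴴ * A * G * (Aᴴ * A) := by simp only [mul_assoc]
      _ = Aᴴ * A := e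
  have hEh : (Aᴴ * A * G)ᴴ = Aᴴ * A * G := by
    rw [conjTranspose_mul, hGh, hh]
    exact c.symm
  have t1 : Aᴴ * (A * (Aᴴ * A * G)) = Aᴴ * A := by
    calc Aᴴ * (A * (Aᴴ * A * G)) = Aᴴ * A * (Aᴴ * A * G) := by simp only [mul_assoc]
      _ = Aᴴ * A := hBE
  have t2 : Aᴴ * A * G * Aᴴ * A = Aᴴ * A := by
    calc Aᴴ * A * G * Aᴴ * A = Aᴴ * A * G * (Aᴴ * A) := by simp only [mul_assoc]
      _ = Aᴴ * A := e
  have hM : (A - A * (Aᴴ * A * G))ᴴ * (A - A * (Aᴴ * A * G)) = 0 := by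
    rw [conjTranspose_sub, conjTranspose_mul, hEh, sub_mul, mul_sub, mul_sub, t1]
    rw [show Aᴴ * A * G * Aᴴ * A = Aᴴ * A from t2]
    rw [show Aᴴ * A * G * Aᴴ * (A * (Aᴴ * A * G)) = Aᴴ * A from by
      calc Aᴴ * A * G * Aᴴ * (A * (Aᴴ * A * G))
          = Aᴴ * A * G * (Aᴴ * (A * (Aᴴ * A * G))) := by simp only [mul_assoc]
        _ = Aᴴ * A * G * (Aᴴ * A) := by rw [t1]
        _ = Aᴴ * A := e]
    rw [sub_self]
  have hAE : A * (Aᴴ * A * G) = A := (sub_eq_zero.mp (conjTranspose_mul_self_eq_zero.mp hM)).symm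
  refine ⟨G * Aᴴ, ?_, ?_, ?_, ?_⟩
  · calc A * (G * Aᴴ) * A = A * (G * (Aᴴ * A)) := by simp only [mul_assoc]
      _ = A * (Aᴴ * A * G) := by rw [← c]
      _ = A := hAE
  · calc G * Aᴴ * A * (G * Aᴴ) = G * (Aᴴ * A) * G * Aᴴ := by simp only [mul_assoc]
      _ = G * Aᴴ := by rw [f]
  · rw [conjTranspose_mul, conjTranspose_mul, hGh, conjTranspose_conjTranspose]
    simp only [mul_assoc]
  · rw [conjTranspose_mul, conjTranspose_mul, hGh, conjTranspose_conjTranspose]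
    calc Aᴴ * (A * G) = Aᴴ * A * G := by simp only [mul_assoc]
      _ = G * (Aᴴ * A) := c
      _ = G * Aᴴ * A := by simp only [mul_assoc]

lemma nilpow_mul {A₁ A₂ : Matrix (Fin n) (Fin n) ℂ} (h21 : A₂ * A₁ = 0) (m : ℕ) :
    A₂ ^ (m + 1) * A₁ = 0 := by
  rw [pow_succ, mul_assoc, h21, mul_zero]

lemma pow_mul_core {A A₁ A₂ : Matrix (Fin n) (Fin n) ℂ} (hsum : A = A₁ + A₂)
    (h21 : A₂ * A₁ = 0) : ∀ m, A ^ m * A₁ = A₁ ^ (m + 1) := by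
  intro m
  induction m with
  | zero => simp
  | succ m ih =>
    calc A ^ (m + 1) * A₁ = A * (A ^ m * A₁) := by rw [pow_succ' A m, mul_assoc]
      _ = A * A₁ ^ (m + 1) := by rw [ih]
      _ = A₁ * A₁ ^ (m + 1) + A₂ * A₁ ^ (m + 1) := by rw [hsum, add_mul]
      _ = A₁ ^ (m + 1 + 1) := by
          rw [show A₂ * A₁ ^ (m + 1) = 0 from by rw [pow_succ' A₁ m, ← mul_assoc, h21, zero_mul],
            add_zero, ← pow_succ' A₁ (m + 1)]

lemma pow_factor {A A₁ A₂ : Matrix (Fin n) (Fin n) ℂ} (hsum : A = A₁ + A₂)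
    (h21 : A₂ * A₁ = 0) : ∀ m, ∃ C, A ^ (m + 1) = A₁ * C + A₂ ^ (m + 1) := by
  intro m
  induction m with
  | zero => exact ⟨1, by rw [pow_one, pow_one, mul_one, hsum]⟩
  | succ m ih =>
    obtain ⟨C, hC⟩ := ih
    refine ⟨C * A, ?_⟩
    have h4 : A₂ ^ (m + 1) * A = A₂ ^ (m + 1 + 1) := by
      rw [hsum, mul_add, nilpow_mul h21 m, zero_add, ← pow_succ]
    calc A ^ (m + 1 + 1) = A ^ (m + 1) * A := pow_succ A (m + 1)
      _ = (A₁ * C + A₂ ^ (m + 1)) * A := by rw [hC]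
      _ = A₁ * (C * A) + A₂ ^ (m + 1) * A := by rw [add_mul, mul_assoc]
      _ = A₁ * (C * A) + A₂ ^ (m + 1 + 1) := by rw [h4]

lemma coreEPInv_unique {A X Y : Matrix (Fin n) (Fin n) ℂ} {k : ℕ}
    (hX : IsCoreEPInv A X k) (hY : IsCoreEPInv A Y k) : X = Y := by
  obtain ⟨x1, x2, x3, x4⟩ := hX
  obtain ⟨y1, y2, y3, y4⟩ := hY
  obtain ⟨Cx, hCx⟩ := exists_factor_s11 x4
  obtain ⟨Cy, hCy⟩ := exists_factor_s11 y4
  have hAYAX : A * Y * (A * X) = A * X := by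
    calc A * Y * (A * X) = A * Y * (A * (A ^ k * Cx)) := by rw [← hCx]
      _ = A * (Y * A ^ (k + 1)) * Cx := by rw [pow_succ' A k]; simp only [mul_assoc]
      _ = A * A ^ k * Cx := by rw [y1]
      _ = A * (A ^ k * Cx) := by rw [mul_assoc]
      _ = A * X := by rw [← hCx]
  have hAXAY : A * X * (A * Y) = A * Y := by
    calc A * X * (A * Y) = A * X * (A * (A ^ k * Cy)) := by rw [← hCy]
      _ = A * (X * A ^ (k + 1)) * Cy := by rw [pow_succ' A k]; simp only [mul_assoc]
      _ = A * A ^ k * Cy := by rw [x1]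
      _ = A * (A ^ k * Cy) := by rw [mul_assoc]
      _ = A * Y := by rw [← hCy]
  have hXY : A * X = A * Y := by
    have h1 := congrArg conjTranspose hAYAX
    rw [conjTranspose_mul, x3, y3] at h1
    exact h1.symm.trans hAXAY
  calc X = X * A * X := x2.symm
    _ = X * (A * X) := by rw [mul_assoc]
    _ = X * (A * Y) := by rw [hXY]
    _ = X * (A * (A ^ k * Cy)) := by rw [← hCy]
    _ = X * A ^ (k + 1) * Cy := by rw [pow_succ' A k]; simp only [mul_assoc]
    _ = A ^ k * Cy := by rw [x1]
    _ = Y := hCy.symm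


/-- `A ≤^⊕ₑ B` iff `A₁ ≤^⊕ B₁` for the core-EP decompositions
`A = A₁ + A₂`, `B = B₁ + B₂`. -/
theorem coreEP_order_iff_core_order_of_parts {n : ℕ}
    (A B A₁ A₂ B₁ B₂ : Matrix (Fin n) (Fin n) ℂ) (k l : ℕ)
    (hkA : HasIndex A k) (hlB : HasIndex B l)
    (hA : IsCoreEPDecomp A A₁ A₂ k) (hB : IsCoreEPDecomp B B₁ B₂ l) :
    CoreEPLE A B ↔ CoreLE A₁ B₁ := by
  obtain ⟨hAsum, hA1g, hA2k, hA12, hA21⟩ := hA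
  obtain ⟨hBsum, hB1g, hB2l, hB12, hB21⟩ := hB
  by_cases hone : (1 : Matrix (Fin n) (Fin n) ℂ) = 0
  · have hz : ∀ M : Matrix (Fin n) (Fin n) ℂ, M = 0 := fun M => by
      rw [← mul_one M, hone, mul_zero]
    have heq : ∀ M N : Matrix (Fin n) (Fin n) ℂ, M = N := fun M N => (hz M).trans (hz N).symm
    have hrLE : ∀ X C : Matrix (Fin n) (Fin n) ℂ, rangeLE X C := fun X C => by
      rw [heq X C]; exact le_rfl
    constructor
    · intro _
      refine ⟨by unfold GroupInvertible; rw [heq (A₁ ^ 2) A₁],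
        by unfold GroupInvertible; rw [heq (B₁ ^ 2) B₁], 0,
        ⟨⟨0, ⟨heq _ _, heq _ _, heq _ _, heq _ _⟩, heq _ _⟩, hrLE _ _⟩, heq _ _, heq _ _⟩
    · intro _
      exact ⟨k, 0, hkA, ⟨heq _ _, heq _ _, heq _ _, hrLE _ _⟩, heq _ _, heq _ _⟩
  obtain ⟨k', rfl⟩ : ∃ k', k = k' + 1 := by
    cases k with
    | zero => exact absurd (by simpa using hA2k) hone
    | succ k' => exact ⟨k', rfl⟩
  obtain ⟨l', rfl⟩ : ∃ l', l = l' + 1 := by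
    cases l with
    | zero => exact absurd (by simpa using hB2l) hone
    | succ l' => exact ⟨l', rfl⟩
  obtain ⟨G, gc, ge, gf⟩ := exists_groupInv hA1g
  obtain ⟨D, dP⟩ := exists_MPInv A₁
  obtain ⟨d1, d2, d3, d4⟩ := dP
  set X₀ := G * A₁ * D with hX₀
  have hDfac : D = D * Dᴴ * A₁ᴴ := by
    calc D = D * A₁ * D := d2.symm
      _ = D * (A₁ * D) := by rw [mul_assoc]
      _ = D * (A₁ * D)ᴴ := by rw [d3]
      _ = D * (Dᴴ * A₁ᴴ) := by rw [conjTranspose_mul]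
      _ = D * Dᴴ * A₁ᴴ := by rw [mul_assoc]
  have hDkill : ∀ Z, A₁ᴴ * Z = 0 → D * Z = 0 := fun Z hZ => by
    conv_lhs => rw [hDfac]
    rw [mul_assoc, hZ, mul_zero]
  have hGfac : G = A₁ * (G * G) := by
    calc G = G * A₁ * G := gf.symm
      _ = A₁ * G * G := by rw [← gc]
      _ = A₁ * (G * G) := by rw [mul_assoc]
  have hkillG : ∀ Z, Z * A₁ = 0 → Z * G = 0 := fun Z hZ => by
    rw [hGfac, ← mul_assoc, hZ, zero_mul]
  have hA2G : A₂ * G = 0 := hkillG A₂ hA21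
  have hDA2 : D * A₂ = 0 := hDkill A₂ hA12
  have hX0A2 : X₀ * A₂ = 0 := by rw [hX₀, mul_assoc, hDA2, mul_zero]
  have hA2X0 : A₂ * X₀ = 0 := by
    rw [hX₀]
    simp only [← mul_assoc]
    rw [hA2G, zero_mul, zero_mul]
  have hX0A1 : X₀ * A₁ = G * A₁ := by
    rw [hX₀]
    calc G * A₁ * D * A₁ = G * (A₁ * D * A₁) := by simp only [mul_assoc]
      _ = G * A₁ := by rw [d1]
  have hA1X0 : A₁ * X₀ = A₁ * D := by
    rw [hX₀]
    calc A₁ * (G * A₁ * D) = A₁ * G * A₁ * D := by simp only [mul_assoc]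
      _ = A₁ * D := by rw [ge]
  have hX0A : X₀ * A = G * A₁ := by rw [hAsum, mul_add, hX0A1, hX0A2, add_zero]
  have hAX0 : A * X₀ = A₁ * D := by rw [hAsum, add_mul, hA1X0, hA2X0, add_zero]
  have hGA1A1 : G * A₁ * A₁ = A₁ := by rw [← gc]; exact ge
  have hEX0 : G * A₁ * X₀ = X₀ := by
    rw [hX₀]
    calc G * A₁ * (G * A₁ * D) = G * A₁ * G * (A₁ * D) := by simp only [mul_assoc]
      _ = G * (A₁ * D) := by rw [gf]
      _ = G * A₁ * D := by rw [mul_assoc]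
  obtain ⟨Ck, hCk0⟩ := pow_factor hAsum hA21 k'
  have hCk : A ^ (k' + 1) = A₁ * Ck := by rw [hCk0, hA2k, add_zero]
  have hGA1Ak : G * A₁ * A ^ (k' + 1) = A ^ (k' + 1) := by
    rw [hCk]
    calc G * A₁ * (A₁ * Ck) = G * A₁ * A₁ * Ck := by simp only [mul_assoc]
      _ = A₁ * Ck := by rw [hGA1A1]
  have hX0Ak1 : X₀ * A ^ (k' + 1 + 1) = A ^ (k' + 1) := by
    rw [pow_succ' A (k' + 1), ← mul_assoc, hX0A, hGA1Ak]
  have hEpow : ∀ m, G * A₁ * A₁ ^ (m + 1) = A₁ ^ (m + 1) := fun m => by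
    rw [pow_succ' A₁ m, ← mul_assoc, hGA1A1]
  have hstepG : ∀ m, G * A₁ ^ (m + 2) = A₁ ^ (m + 1) := fun m => by
    rw [pow_succ' A₁ (m + 1), ← mul_assoc]
    exact hEpow m
  have hA1Gpow : ∀ m, A₁ = G ^ m * A₁ ^ (m + 1) := by
    intro m
    induction m with
    | zero => simp
    | succ m ih =>
      calc A₁ = G ^ m * A₁ ^ (m + 1) := ih
        _ = G ^ m * (G * A₁ ^ (m + 2)) := by rw [hstepG]
        _ = G ^ m * G * A₁ ^ (m + 2) := by rw [← mul_assoc]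
        _ = G ^ (m + 1) * A₁ ^ (m + 2) := by rw [pow_succ G m]
  have hA1rank : ∀ m, (A₁ ^ (m + 1)).rank = A₁.rank := by
    intro m
    have h1 : (A₁ ^ (m + 1)).rank ≤ A₁.rank := by
      rw [pow_succ]; exact rank_mul_le_right _ _
    have h2 : A₁.rank ≤ (A₁ ^ (m + 1)).rank := by
      conv_lhs => rw [hA1Gpow m]
      exact rank_mul_le_right _ _
    exact le_antisymm h1 h2
  have hrangeAk : LinearMap.range (A ^ (k' + 1)).mulVecLin = LinearMap.range A₁.mulVecLin := by
    have hle : rangeLE (A ^ (k' + 1)) A₁ := by rw [hCk]; exact rangeLE_of_factor _ _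
    have hr2 : A₁.rank ≤ (A ^ (k' + 1)).rank := by
      calc A₁.rank = (A₁ ^ (k' + 1 + 1)).rank := (hA1rank (k' + 1)).symm
        _ = (A ^ (k' + 1) * A₁).rank := by rw [pow_mul_core hAsum hA21 (k' + 1)]
        _ ≤ (A ^ (k' + 1)).rank := rank_mul_le_left _ _
    exact range_eq_of_rangeLE hle hr2
  have hX0fac : X₀ = A₁ * (G * D) := by rw [hX₀, ← gc, mul_assoc]
  have hX0rangeA1 : rangeLE X₀ A₁ := by rw [hX0fac]; exact rangeLE_of_factor _ _
  have hX0rangeAk : rangeLE X₀ (A ^ (k' + 1)) :=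
    hX0rangeA1.trans (le_of_eq hrangeAk.symm)
  have hX0ep : IsCoreEPInv A X₀ (k' + 1) := by
    refine ⟨hX0Ak1, ?_, ?_, hX0rangeAk⟩
    · rw [hX0A]; exact hEX0
    · rw [hAX0]; exact d3
  have hQAk : A₁ * D * A ^ (k' + 1) = A ^ (k' + 1) := by
    rw [hCk]
    calc A₁ * D * (A₁ * Ck) = A₁ * D * A₁ * Ck := by simp only [mul_assoc]
      _ = A₁ * Ck := by rw [d1]
  have hQX0 : A₁ * D * X₀ = X₀ := by
    rw [hX0fac]
    calc A₁ * D * (A₁ * (G * D)) = A₁ * D * A₁ * (G * D) := by simp only [mul_assoc]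
      _ = A₁ * (G * D) := by rw [d1]
  have key : ∀ W, A₁ = B₁ * W → X₀ * B₂ = 0 ∧ B₂ * X₀ = 0 := by
    intro W hW
    constructor
    · have h5 : A₁ᴴ * B₂ = 0 := by
        rw [hW, conjTranspose_mul, mul_assoc, hB12, mul_zero]
      rw [hX₀, mul_assoc, hDkill B₂ h5, mul_zero]
    · have h5 : B₂ * A₁ = 0 := by rw [hW, ← mul_assoc, hB21, zero_mul]
      rw [hX0fac, ← mul_assoc, h5, zero_mul]
  constructor
  · rintro ⟨k2, X, hidx2, hXep, hXA, hAX⟩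
    have hk2 : k2 = k' + 1 := le_antisymm (hidx2.2 (k' + 1) hkA.1) (hkA.2 k2 hidx2.1)
    subst hk2
    have hXX0 : X = X₀ := coreEPInv_unique hXep hX0ep
    rw [hXX0] at hXA hAX
    have hBX : B * X₀ = A₁ * D := hAX.symm.trans hAX0
    have hAkB : ∀ m, A ^ (k' + 1) = B ^ m * (X₀ ^ m * A ^ (k' + 1)) := by
      intro m
      induction m with
      | zero => simp
      | succ m ih =>
        have hstep : A₁ * D * (X₀ ^ m * A ^ (k' + 1)) = X₀ ^ m * A ^ (k' + 1) := by
          cases m with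
          | zero => simpa using hQAk
          | succ m =>
            calc A₁ * D * (X₀ ^ (m + 1) * A ^ (k' + 1))
                = A₁ * D * X₀ * (X₀ ^ m * A ^ (k' + 1)) := by
                  rw [pow_succ' X₀ m]; simp only [mul_assoc]
              _ = X₀ * (X₀ ^ m * A ^ (k' + 1)) := by rw [hQX0]
              _ = X₀ ^ (m + 1) * A ^ (k' + 1) := by
                  rw [pow_succ' X₀ m]; simp only [mul_assoc]
        calc A ^ (k' + 1) = B ^ m * (X₀ ^ m * A ^ (k' + 1)) := ih
          _ = B ^ m * (A₁ * D * (X₀ ^ m * A ^ (k' + 1))) := by rw [hstep]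
          _ = B ^ m * (B * X₀ * (X₀ ^ m * A ^ (k' + 1))) := by rw [hBX]
          _ = B ^ (m + 1) * (X₀ ^ (m + 1) * A ^ (k' + 1)) := by
              rw [pow_succ B m, pow_succ' X₀ m]; simp only [mul_assoc]
    obtain ⟨Cl, hCl0⟩ := pow_factor hBsum hB21 l'
    have hCl : B ^ (l' + 1) = B₁ * Cl := by rw [hCl0, hB2l, add_zero]
    have hrA1B1 : rangeLE A₁ B₁ := by
      have h7 : rangeLE (A ^ (k' + 1)) (B ^ (l' + 1)) := by
        rw [hAkB (l' + 1)]; exact rangeLE_of_factor _ _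
      have h8 : rangeLE (B ^ (l' + 1)) B₁ := by rw [hCl]; exact rangeLE_of_factor _ _
      exact le_trans (le_of_eq hrangeAk.symm) (le_trans h7 h8)
    obtain ⟨W, hW⟩ := exists_factor_s11 hrA1B1
    obtain ⟨hX0B2, hB2X0⟩ := key W hW
    have hXB1 : X₀ * B₁ = X₀ * A₁ := by
      have h9 : X₀ * B = X₀ * B₁ := by rw [hBsum, mul_add, hX0B2, add_zero]
      have h10 : X₀ * A = X₀ * A₁ := by rw [hAsum, mul_add, hX0A2, add_zero]
      rw [← h9, ← hXA, h10]
    have hB1X : B₁ * X₀ = A₁ * X₀ := by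
      have h9 : B * X₀ = B₁ * X₀ := by rw [hBsum, add_mul, hB2X0, add_zero]
      have h10 : A * X₀ = A₁ * X₀ := by rw [hAsum, add_mul, hA2X0, add_zero]
      rw [← h9, ← hAX, h10]
    exact ⟨hA1g, hB1g, X₀, ⟨⟨D, ⟨d1, d2, d3, d4⟩, hA1X0⟩, hX0rangeA1⟩,
      hXB1.symm, hB1X.symm⟩
  · rintro ⟨_, _, Y, ⟨⟨Dm, hDm, hYD⟩, hYr⟩, hYA, hAY⟩
    have hDmD : Dm = D := MPInv_unique hDm ⟨d1, d2, d3, d4⟩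
    rw [hDmD] at hYD
    obtain ⟨Z, hZ⟩ := exists_factor_s11 hYr
    have hYX0 : Y = X₀ := by
      calc Y = A₁ * Z := hZ
        _ = G * A₁ * A₁ * Z := by rw [hGA1A1]
        _ = G * A₁ * (A₁ * Z) := by simp only [mul_assoc]
        _ = G * A₁ * Y := by rw [← hZ]
        _ = G * (A₁ * Y) := by rw [mul_assoc]
        _ = G * (A₁ * D) := by rw [hYD]
        _ = X₀ := by rw [hX₀, mul_assoc]
    rw [hYX0] at hYA hAY
    have hW : A₁ = B₁ * (X₀ * A₁) := by
      calc A₁ = A₁ * D * A₁ := d1.symm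
        _ = A₁ * X₀ * A₁ := by rw [← hA1X0]
        _ = B₁ * X₀ * A₁ := by rw [hAY]
        _ = B₁ * (X₀ * A₁) := by rw [mul_assoc]
    obtain ⟨hX0B2, hB2X0⟩ := key (X₀ * A₁) hW
    refine ⟨k' + 1, X₀, hkA, hX0ep, ?_, ?_⟩
    · rw [hAsum, hBsum, mul_add, mul_add, hX0A2, hX0B2, hYA]
    · rw [hAsum, hBsum, add_mul, add_mul, hA2X0, hB2X0, hAY]


end CoreEP
end

section
/- The core-EP order is a pre-order: it is reflexive and transitive on ℂ^{n×n}. -/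
open Matrix

namespace CoreEP

variable {I : Type*} [Fintype I] [DecidableEq I]

open scoped ComplexOrder

section Helpers

set_option linter.unusedSectionVars false

private lemma eq_of_mulVec_eq {M N : Matrix I I ℂ} (h : ∀ v, M *ᵥ v = N *ᵥ v) : M = N := by
  ext i j
  have h2 := congrFun (h (Pi.single j 1)) i
  simpa [Matrix.mulVec_single_one] using h2

lemma rangeLE_mul_left (M N : Matrix I I ℂ) : rangeLE (M * N) M := by
  rw [rangeLE, Matrix.mulVecLin_mul]
  exact LinearMap.range_comp_le_range _ _

lemma rangeLE_mul_mono {M N : Matrix I I ℂ} (Z : Matrix I I ℂ) (h : rangeLE M N) :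
    rangeLE (Z * M) (Z * N) := by
  rw [rangeLE, Matrix.mulVecLin_mul, Matrix.mulVecLin_mul, LinearMap.range_comp,
    LinearMap.range_comp]
  exact Submodule.map_mono h

lemma rangeLE_trans {M N P : Matrix I I ℂ} (h1 : rangeLE M N) (h2 : rangeLE N P) :
    rangeLE M P := le_trans h1 h2

lemma fix_of_rangeLE {P M N : Matrix I I ℂ} (hr : rangeLE M N) (h : P * N = N) :
    P * M = M := by
  apply eq_of_mulVec_eq
  intro v
  obtain ⟨w, hw⟩ := hr (LinearMap.mem_range_self M.mulVecLin v)
  simp only [Matrix.mulVecLin_apply] at hw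
  rw [← Matrix.mulVec_mulVec, ← hw, Matrix.mulVec_mulVec, h]

lemma kill_of_rangeLE {Z M N : Matrix I I ℂ} (hr : rangeLE M N) (h : Z * N = 0) :
    Z * M = 0 := by
  apply eq_of_mulVec_eq
  intro v
  obtain ⟨w, hw⟩ := hr (LinearMap.mem_range_self M.mulVecLin v)
  simp only [Matrix.mulVecLin_apply] at hw
  rw [← Matrix.mulVec_mulVec, ← hw, Matrix.mulVec_mulVec, h, Matrix.zero_mulVec,
    Matrix.zero_mulVec]

lemma rangeLE_of_rank_le {M N : Matrix I I ℂ} (h : rangeLE N M) (hr : M.rank ≤ N.rank) :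
    rangeLE M N :=
  le_of_eq (Submodule.eq_of_le_of_finrank_le h hr).symm

lemma exists_herm_pinv (H : Matrix I I ℂ) (hH : H.IsHermitian) :
    ∃ W : Matrix I I ℂ, H * W * H = H ∧ W * H * W = W ∧ Wᴴ = W ∧ H * W = W * H := by
  classical
  obtain ⟨U, hUU, d, hspec⟩ : ∃ U : Matrix I I ℂ, star U * U = 1 ∧
      ∃ d : I → ℝ, H = U * diagonal (fun i => (d i : ℂ)) * star U := by
    refine ⟨hH.eigenvectorUnitary, Matrix.mem_unitaryGroup_iff'.mp hH.eigenvectorUnitary.2,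
      hH.eigenvalues, ?_⟩
    exact hH.spectral_theorem
  set e : I → ℂ := fun i => (d i : ℂ) with he
  set e' : I → ℂ := fun i => ((d i)⁻¹ : ℝ) with he'
  have key : ∀ f g : I → ℂ, (U * diagonal f * star U) * (U * diagonal g * star U)
      = U * diagonal (f * g) * star U := by
    intro f g
    simp only [Matrix.mul_assoc]
    rw [← Matrix.mul_assoc (star U) U, hUU, Matrix.one_mul,
      ← Matrix.mul_assoc (diagonal f), diagonal_mul_diagonal]
    rfl
  have h1 : (e * e') * e = e := by
    funext i
    by_cases h : d i = 0 <;> simp [he, he', h]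
  have h2 : (e' * e) * e' = e' := by
    funext i
    by_cases h : d i = 0 <;> simp [he, he', h]
  have h3 : star e' = e' := by
    funext i
    simp [he', RCLike.star_def, RCLike.conj_ofReal]
  have h4 : e * e' = e' * e := mul_comm _ _
  refine ⟨U * diagonal e' * star U, ?_, ?_, ?_, ?_⟩
  · rw [hspec, key, key, h1]
  · rw [hspec, key, key, h2]
  · simp only [Matrix.star_eq_conjTranspose, conjTranspose_mul, conjTranspose_conjTranspose,
      diagonal_conjTranspose, h3, Matrix.mul_assoc]
  · rw [hspec, key, key, h4]

lemma exists_MP (M : Matrix I I ℂ) :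
    ∃ Y : Matrix I I ℂ, M * Y * M = M ∧ Y * M * Y = Y ∧ (M * Y)ᴴ = M * Y ∧ (Y * M)ᴴ = Y * M := by
  obtain ⟨W, h1, h2, h3, h4⟩ := exists_herm_pinv (Mᴴ * M) (isHermitian_conjTranspose_mul_self M)
  have hMH : M * (W * (Mᴴ * M)) = M := by
    have hz : (Mᴴ * M) * (W * (Mᴴ * M) - 1) = 0 := by
      rw [mul_sub, mul_one, ← Matrix.mul_assoc, h1, sub_self]
    have h5 := (Matrix.conjTranspose_mul_self_mul_eq_zero M _).mp hz
    rw [mul_sub, mul_one, sub_eq_zero] at h5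
    exact h5
  refine ⟨W * Mᴴ, ?_, ?_, ?_, ?_⟩
  · calc M * (W * Mᴴ) * M = M * (W * (Mᴴ * M)) := by simp only [Matrix.mul_assoc]
    _ = M := hMH
  · calc W * Mᴴ * M * (W * Mᴴ) = (W * (Mᴴ * M) * W) * Mᴴ := by simp only [Matrix.mul_assoc]
    _ = W * Mᴴ := by rw [h2]
  · calc (M * (W * Mᴴ))ᴴ
        = M * Wᴴ * Mᴴ := by simp only [conjTranspose_mul, conjTranspose_conjTranspose, Matrix.mul_assoc]
    _ = M * (W * Mᴴ) := by rw [h3, Matrix.mul_assoc]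
  · calc (W * Mᴴ * M)ᴴ
        = (Mᴴ * M) * Wᴴ := by simp only [conjTranspose_mul, conjTranspose_conjTranspose, Matrix.mul_assoc]
    _ = (Mᴴ * M) * W := by rw [h3]
    _ = W * (Mᴴ * M) := h4
    _ = W * Mᴴ * M := by rw [Matrix.mul_assoc]

/-- Every square complex matrix has an index. -/
lemma exists_hasIndex (A : Matrix I I ℂ) : ∃ k, HasIndex A k := by
  classical
  have hex : ∃ j, (A ^ (j + 1)).rank = (A ^ j).rank := by
    by_contra hc
    push_neg at hc
    have hlt : ∀ j, (A ^ (j + 1)).rank < (A ^ j).rank := fun j =>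
      lt_of_le_of_ne (by rw [pow_succ]; exact Matrix.rank_mul_le_left _ _) (hc j)
    have key : ∀ j, (A ^ j).rank + j ≤ (A ^ 0).rank := by
      intro j
      induction j with
      | zero => simp
      | succ m ih => have := hlt m; omega
    have := key ((A ^ 0).rank + 1)
    omega
  exact ⟨Nat.find hex, Nat.find_spec hex, fun j hj => Nat.find_min' hex hj⟩

/-- At the index, `range A^k = range A^(k+1)`, as a `rangeLE` in the nontrivial direction. -/
lemma rangeLE_pow_of_rank_eq {A : Matrix I I ℂ} {k : ℕ}
    (h : (A ^ (k + 1)).rank = (A ^ k).rank) : rangeLE (A ^ k) (A ^ (k + 1)) := by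
  refine rangeLE_of_rank_le ?_ (le_of_eq h.symm)
  rw [pow_succ]
  exact rangeLE_mul_left _ _

/-- Construction of the core-EP inverse. -/
lemma exists_coreEPInv (A : Matrix I I ℂ) {k : ℕ}
    (hk : (A ^ (k + 1)).rank = (A ^ k).rank) : ∃ X, IsCoreEPInv A X k := by
  obtain ⟨Y, hY1, hY2, hY3, hY4⟩ := exists_MP (A ^ (k + 1))
  refine ⟨A ^ k * Y, ?_, ?_, ?_, ?_⟩
  · -- (A^k * Y) * A^(k+1) = A^k
    have hrank : rangeLE ((A ^ k)ᴴ) ((A ^ (k + 1))ᴴ) := by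
      refine rangeLE_of_rank_le ?_ ?_
      · rw [pow_succ']
        rw [conjTranspose_mul]
        exact rangeLE_mul_left _ _
      · rw [Matrix.rank_conjTranspose, Matrix.rank_conjTranspose, hk]
    have hfix : (Y * A ^ (k + 1)) * (A ^ (k + 1))ᴴ = (A ^ (k + 1))ᴴ := by
      conv_lhs => rw [← hY4]
      rw [← conjTranspose_mul, ← Matrix.mul_assoc, hY1]
    have hfix2 : (Y * A ^ (k + 1)) * (A ^ k)ᴴ = (A ^ k)ᴴ := fix_of_rangeLE hrank hfix
    have := congrArg conjTranspose hfix2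
    rw [conjTranspose_mul, conjTranspose_conjTranspose, hY4] at this
    rw [Matrix.mul_assoc, this]
  · -- X * A * X = X
    calc A ^ k * Y * A * (A ^ k * Y)
        = A ^ k * (Y * (A * A ^ k * Y)) := by simp only [Matrix.mul_assoc]
    _ = A ^ k * (Y * (A ^ (k + 1) * Y)) := by rw [← pow_succ']
    _ = A ^ k * (Y * A ^ (k + 1) * Y) := by simp only [Matrix.mul_assoc]
    _ = A ^ k * Y := by rw [hY2]
  · -- (A * X)ᴴ = A * X
    calc (A * (A ^ k * Y))ᴴ = (A ^ (k + 1) * Y)ᴴ := by rw [← Matrix.mul_assoc, ← pow_succ']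
    _ = A ^ (k + 1) * Y := hY3
    _ = A * (A ^ k * Y) := by rw [← Matrix.mul_assoc, ← pow_succ']
  · exact rangeLE_mul_left _ _

end Helpers

/-- The core-EP order is a pre-order: reflexive and transitive. -/
theorem coreEP_order_preorder {n : ℕ} :
    (∀ A : Matrix (Fin n) (Fin n) ℂ, CoreEPLE A A) ∧
    (∀ A B C : Matrix (Fin n) (Fin n) ℂ, CoreEPLE A B → CoreEPLE B C → CoreEPLE A C) := by
  classical
  constructor
  · -- Reflexivity
    intro A
    obtain ⟨k, hidx⟩ := exists_hasIndex A
    obtain ⟨X, hX⟩ := exists_coreEPInv A hidx.1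
    exact ⟨k, X, hidx, hX, rfl, rfl⟩
  · -- Transitivity
    rintro A B C ⟨k, X, hidxA, ⟨hX1, hX2, hX3, hX4⟩, hXAB, hABX⟩
      ⟨l, Y, hidxB, ⟨hY1, hY2, hY3, hY4⟩, hYBC, hBCY⟩
    -- Range inclusions at the indices
    have rAk : rangeLE (A ^ k) (A ^ (k + 1)) := rangeLE_pow_of_rank_eq hidxA.1
    have rBl : rangeLE (B ^ l) (B ^ (l + 1)) := rangeLE_pow_of_rank_eq hidxB.1
    -- P = A * X is a projection fixing range A^k
    have hPA1 : (A * X) * A ^ (k + 1) = A ^ (k + 1) := by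
      rw [Matrix.mul_assoc, hX1, ← pow_succ']
    have hPAk : (A * X) * A ^ k = A ^ k := fix_of_rangeLE rAk hPA1
    have hPX : (A * X) * X = X := fix_of_rangeLE hX4 hPAk
    -- Q = B * Y is a projection fixing range B^l
    have hQB1 : (B * Y) * B ^ (l + 1) = B ^ (l + 1) := by
      rw [Matrix.mul_assoc, hY1, ← pow_succ']
    have hQBl : (B * Y) * B ^ l = B ^ l := fix_of_rangeLE rBl hQB1
    -- range A^k ⊆ range B^l
    have hBX : B * X = A * X := hABX.symm
    have hfixm : ∀ m : ℕ, (A * X) * (X ^ m * A ^ k) = X ^ m * A ^ k := by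
      intro m
      cases m with
      | zero => simpa using hPAk
      | succ j =>
          rw [pow_succ', Matrix.mul_assoc X, ← Matrix.mul_assoc (A * X), hPX]
    have hkey : ∀ m : ℕ, B ^ m * (X ^ m * A ^ k) = A ^ k := by
      intro m
      induction m with
      | zero => simp
      | succ j ih =>
          calc B ^ (j + 1) * (X ^ (j + 1) * A ^ k)
              = B ^ j * ((B * X) * (X ^ j * A ^ k)) := by
                rw [pow_succ, pow_succ']
                simp only [Matrix.mul_assoc]
          _ = B ^ j * (X ^ j * A ^ k) := by rw [hBX, hfixm]
          _ = A ^ k := ih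
    have hAkBl : rangeLE (A ^ k) (B ^ l) := by
      have := hkey l
      rw [← this]
      exact rangeLE_mul_left _ _
    -- range B^l ⊆ range Y
    have hBlY : rangeLE (B ^ l) Y := by
      rw [← hY1]
      exact rangeLE_mul_left _ _
    have hXY : rangeLE X Y := rangeLE_trans hX4 (rangeLE_trans hAkBl hBlY)
    -- N = C - B is annihilated by Y on both sides
    have hNY : (C - B) * Y = 0 := by rw [sub_mul, hBCY, sub_self]
    have hYN : Y * (C - B) = 0 := by rw [mul_sub, hYBC, sub_self]
    -- N * X = 0
    have hNX : (C - B) * X = 0 := kill_of_rangeLE hXY hNY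
    -- P = A * X has range inside range B^l, and Q fixes it
    have hPrange : rangeLE (A * X) (B ^ l) := by
      have h1 : rangeLE (A * X) (A ^ (k + 1)) := by
        have h := rangeLE_mul_mono A hX4
        rwa [← pow_succ'] at h
      have h2 : rangeLE (A ^ (k + 1)) (A ^ k) := by
        rw [pow_succ]; exact rangeLE_mul_left _ _
      exact rangeLE_trans (rangeLE_trans h1 h2) hAkBl
    have hQP : (B * Y) * (A * X) = A * X := fix_of_rangeLE hPrange hQBl
    -- P * Q = P by taking conjugate transposes
    have hPQ : (A * X) * (B * Y) = A * X := by
      have h := congrArg conjTranspose hQP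
      rw [conjTranspose_mul, hX3, hY3] at h
      exact h
    -- X * N = 0
    have hQN : (B * Y) * (C - B) = 0 := by rw [Matrix.mul_assoc, hYN, Matrix.mul_zero]
    have hXP : X * (A * X) = X := by rw [← Matrix.mul_assoc, hX2]
    have hXN : X * (C - B) = 0 := by
      calc X * (C - B) = X * ((A * X) * (C - B)) := by
            rw [← Matrix.mul_assoc, hXP]
      _ = X * ((A * X) * ((B * Y) * (C - B))) := by rw [← Matrix.mul_assoc (A * X), hPQ]
      _ = 0 := by rw [hQN, Matrix.mul_zero, Matrix.mul_zero]
    -- Conclude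
    refine ⟨k, X, hidxA, ⟨hX1, hX2, hX3, hX4⟩, ?_, ?_⟩
    · rw [hXAB]
      have h : X * C - X * B = 0 := by rw [← mul_sub, hXN]
      exact (sub_eq_zero.mp h).symm
    · rw [hABX]
      have h : C * X - B * X = 0 := by rw [← sub_mul, hNX]
      exact (sub_eq_zero.mp h).symm


end CoreEP
end

section
/- The core-EP order is not antisymmetric: there exist 3×3 complex matrices A ≠ B with A ≤^⊕ₑ B and B ≤^⊕ₑ A. For example A = [[1,2,3],[0,0,0],[0,0,0]] and B = [[1,2,3],[0,0,1],[0,0,0]]. -/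
open Matrix

namespace CoreEP

variable {I : Type*} [Fintype I] [DecidableEq I]

set_option linter.unusedSectionVars false in
lemma rangeLE_of_eq_mul' {X A : Matrix I I ℂ} (h : X = A * X) : rangeLE X A := by
  rintro y ⟨v, rfl⟩
  refine ⟨X.mulVec v, ?_⟩
  rw [mulVecLin_apply, mulVecLin_apply, mulVec_mulVec, ← h]

lemma aux_rank_le_one {r₁ r₂ r₃ : ℂ} :
    (!![r₁, r₂, r₃; 0, 0, 0; 0, 0, 0] : Matrix (Fin 3) (Fin 3) ℂ).rank ≤ 1 := by
  have h : !![r₁, r₂, r₃; 0, 0, 0; 0, 0, 0] = !![(1:ℂ); 0; 0] * !![r₁, r₂, r₃] := by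
    ext i j
    fin_cases i <;> fin_cases j <;>
      simp [Matrix.mul_apply, Fin.sum_univ_succ, Matrix.vecHead, Matrix.vecTail]
  rw [h]
  calc (!![(1:ℂ); 0; 0] * !![r₁, r₂, r₃]).rank
      ≤ (!![(1:ℂ); 0; 0]).rank := rank_mul_le_left _ _
    _ ≤ Fintype.card (Fin 1) := rank_le_card_width _
    _ = 1 := by simp

lemma aux_rankB_le :
    (!![(1:ℂ), 2, 3; 0, 0, 1; 0, 0, 0] : Matrix (Fin 3) (Fin 3) ℂ).rank ≤ 2 := by
  have h : !![(1:ℂ), 2, 3; 0, 0, 1; 0, 0, 0]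
      = !![(1:ℂ), 0; 0, 1; 0, 0] * !![(1:ℂ), 2, 3; 0, 0, 1] := by
    ext i j
    fin_cases i <;> fin_cases j <;>
      simp [Matrix.mul_apply, Fin.sum_univ_succ, Matrix.vecHead, Matrix.vecTail]
  rw [h]
  calc (!![(1:ℂ), 0; 0, 1; 0, 0] * !![(1:ℂ), 2, 3; 0, 0, 1]).rank
      ≤ (!![(1:ℂ), 0; 0, 1; 0, 0]).rank := rank_mul_le_left _ _
    _ ≤ Fintype.card (Fin 2) := rank_le_card_width _
    _ = 2 := by simp

lemma aux_rankB_ge :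
    2 ≤ (!![(1:ℂ), 2, 3; 0, 0, 1; 0, 0, 0] : Matrix (Fin 3) (Fin 3) ℂ).rank := by
  have h : !![(1:ℂ), 0, 0; 0, 1, 0]
      * (!![(1:ℂ), 2, 3; 0, 0, 1; 0, 0, 0] * !![(1:ℂ), 0; 0, 0; 0, 1]) = !![1, 3; 0, 1] := by
    ext i j
    fin_cases i <;> fin_cases j <;>
      simp [Matrix.mul_apply, Fin.sum_univ_succ, Matrix.vecHead, Matrix.vecTail]
  have h2 : (!![(1:ℂ), 3; 0, 1]).rank = 2 := by
    rw [Matrix.rank_of_isUnit]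
    · simp
    · rw [Matrix.isUnit_iff_isUnit_det, Matrix.det_fin_two_of]; norm_num
  calc 2 = (!![(1:ℂ), 3; 0, 1]).rank := h2.symm
    _ = (!![(1:ℂ), 0, 0; 0, 1, 0]
          * (!![(1:ℂ), 2, 3; 0, 0, 1; 0, 0, 0] * !![(1:ℂ), 0; 0, 0; 0, 1])).rank := by rw [h]
    _ ≤ (!![(1:ℂ), 2, 3; 0, 0, 1; 0, 0, 0] * !![(1:ℂ), 0; 0, 0; 0, 1]).rank :=
        rank_mul_le_right _ _
    _ ≤ (!![(1:ℂ), 2, 3; 0, 0, 1; 0, 0, 0]).rank := rank_mul_le_left _ _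

/-- The core-EP order is not antisymmetric. -/
theorem coreEP_order_not_antisymm :
    ∃ A B : Matrix (Fin 3) (Fin 3) ℂ, A ≠ B ∧ CoreEPLE A B ∧ CoreEPLE B A ∧
      A = !![1, 2, 3; 0, 0, 0; 0, 0, 0] ∧ B = !![1, 2, 3; 0, 0, 1; 0, 0, 0] := by
  set A : Matrix (Fin 3) (Fin 3) ℂ := !![1, 2, 3; 0, 0, 0; 0, 0, 0] with hA
  set B : Matrix (Fin 3) (Fin 3) ℂ := !![1, 2, 3; 0, 0, 1; 0, 0, 0] with hB
  set X : Matrix (Fin 3) (Fin 3) ℂ := !![1, 0, 0; 0, 0, 0; 0, 0, 0] with hX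
  set B2 : Matrix (Fin 3) (Fin 3) ℂ := !![1, 2, 5; 0, 0, 0; 0, 0, 0] with hB2
  have hAA : A * A = A := by rw [hA, mul_fin_three]; norm_num
  have hXA : X * A = A := by rw [hX, hA, mul_fin_three]; norm_num
  have hXB : X * B = A := by rw [hX, hB, hA, mul_fin_three]; norm_num
  have hAX : A * X = X := by rw [hA, hX, mul_fin_three]; norm_num
  have hBX : B * X = X := by rw [hB, hX, mul_fin_three]; norm_num
  have hBB : B * B = B2 := by rw [hB, hB2, mul_fin_three]; norm_num
  have hB2B : B2 * B = B2 := by rw [hB, hB2, mul_fin_three]; norm_num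
  have hXB2 : X * B2 = B2 := by rw [hX, hB2, mul_fin_three]; norm_num
  have hB2X : B2 * X = X := by rw [hB2, hX, mul_fin_three]; norm_num
  have hXH : Xᴴ = X := by
    rw [hX]; ext i j; fin_cases i <;> fin_cases j <;>
      simp [Matrix.conjTranspose_apply, Matrix.vecHead, Matrix.vecTail]
  have hApow2 : A ^ 2 = A := by rw [pow_two, hAA]
  have hBpow2 : B ^ 2 = B2 := by rw [pow_two, hBB]
  have hBpow3 : B ^ 3 = B2 := by
    rw [pow_succ, hBpow2, hB2B]
  have hrank1 : (1 : Matrix (Fin 3) (Fin 3) ℂ).rank = 3 := by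
    rw [Matrix.rank_one]; simp
  have hrA : A.rank ≤ 1 := aux_rank_le_one
  have hrB2 : B2.rank ≤ 1 := aux_rank_le_one
  have hrBle : B.rank ≤ 2 := aux_rankB_le
  have hrBge : 2 ≤ B.rank := aux_rankB_ge
  refine ⟨A, B, ?_, ?_, ?_, rfl, rfl⟩
  · intro h
    have := congrFun (congrFun h 1) 2
    rw [hA, hB] at this
    simp at this
  · refine ⟨1, X, ⟨?_, ?_⟩, ⟨?_, ?_, ?_, ?_⟩, ?_, ?_⟩
    · rw [hApow2, pow_one]
    · intro j hj
      match j with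
      | 0 =>
        exfalso
        rw [pow_one, pow_zero, hrank1] at hj
        omega
      | n + 1 => exact Nat.succ_le_succ (Nat.zero_le n)
    · rw [hApow2, pow_one, hXA]
    · rw [hXA, hAX]
    · rw [hAX, hXH]
    · rw [pow_one]
      exact rangeLE_of_eq_mul' hAX.symm
    · rw [hXA, hXB]
    · rw [hAX, hBX]
  · refine ⟨2, X, ⟨?_, ?_⟩, ⟨?_, ?_, ?_, ?_⟩, ?_, ?_⟩
    · show (B ^ 3).rank = (B ^ 2).rank
      rw [hBpow3, hBpow2]
    · intro j hj
      match j with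
      | 0 =>
        exfalso
        rw [pow_one, pow_zero, hrank1] at hj
        omega
      | 1 =>
        exfalso
        rw [hBpow2, pow_one] at hj
        omega
      | n + 2 => exact Nat.succ_le_succ (Nat.succ_le_succ (Nat.zero_le n))
    · show X * B ^ 3 = B ^ 2
      rw [hBpow3, hBpow2, hXB2]
    · rw [hXB, hAX]
    · rw [hBX, hXH]
    · rw [hBpow2]
      exact rangeLE_of_eq_mul' hB2X.symm
    · rw [hXB, hXA]
    · rw [hBX, hAX]


end CoreEP
end

section
/- For A = [[1,2,3],[0,0,0],[0,0,0]] and B = [[1,2,3],[0,0,1],[0,0,0]], one has A ≤^⊕ₑ B but not A ≤^D B (i.e., it fails that A^k B = B A^k = A^{k+1} with k = Ind(A) = 1), since AB ≠ BA while A² = AB would be required. -/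
open Matrix

namespace CoreEP

variable {I : Type*} [Fintype I] [DecidableEq I]

/-- For `A = [[1,2,3],[0,0,0],[0,0,0]]` and `B = [[1,2,3],[0,0,1],[0,0,0]]`,
`A ≤^⊕ₑ B` holds but the Drazin order `A ≤^D B` fails (`Ind A = 1` and `A B ≠ B A`). -/
theorem coreEP_order_not_drazin_order :
    let A : Matrix (Fin 3) (Fin 3) ℂ := !![1, 2, 3; 0, 0, 0; 0, 0, 0]
    let B : Matrix (Fin 3) (Fin 3) ℂ := !![1, 2, 3; 0, 0, 1; 0, 0, 0]
    CoreEPLE A B ∧ HasIndex A 1 ∧ A * B ≠ B * A ∧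
      ¬(A ^ 1 * B = A ^ 2 ∧ B * A ^ 1 = A ^ 2) := by
  intro A B
  set X : Matrix (Fin 3) (Fin 3) ℂ := !![1, 0, 0; 0, 0, 0; 0, 0, 0] with hX
  have hA2 : A * A = A := by
    ext i j; fin_cases i <;> fin_cases j <;>
      simp [A, Matrix.mul_apply, Fin.sum_univ_three, Matrix.vecHead, Matrix.vecTail]
  have hXA : X * A = A := by
    ext i j; fin_cases i <;> fin_cases j <;>
      simp [A, X, Matrix.mul_apply, Fin.sum_univ_three, Matrix.vecHead, Matrix.vecTail]
  have hXB : X * B = A := by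
    ext i j; fin_cases i <;> fin_cases j <;>
      simp [A, B, X, Matrix.mul_apply, Fin.sum_univ_three, Matrix.vecHead, Matrix.vecTail]
  have hAX : A * X = X := by
    ext i j; fin_cases i <;> fin_cases j <;>
      simp [A, X, Matrix.mul_apply, Fin.sum_univ_three, Matrix.vecHead, Matrix.vecTail]
  have hBX : B * X = X := by
    ext i j; fin_cases i <;> fin_cases j <;>
      simp [B, X, Matrix.mul_apply, Fin.sum_univ_three, Matrix.vecHead, Matrix.vecTail]
  have hXH : Xᴴ = X := by
    ext i j; fin_cases i <;> fin_cases j <;>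
      simp [X, Matrix.vecHead, Matrix.vecTail]
  have hfact : A = !![(1:ℂ); 0; 0] * !![(1:ℂ), 2, 3] := by
    ext i j; fin_cases i <;> fin_cases j <;>
      simp [A, Matrix.mul_apply, Fin.sum_univ_one, Matrix.vecHead, Matrix.vecTail]
  have hAB : (A * B) 0 2 ≠ (B * A) 0 2 := by
    simp [A, B, Matrix.mul_apply, Fin.sum_univ_three, Matrix.vecHead, Matrix.vecTail]
  have hABA : (A * B) 0 2 ≠ A 0 2 := by
    simp [A, B, Matrix.mul_apply, Fin.sum_univ_three, Matrix.vecHead, Matrix.vecTail]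
  have hApow : A ^ 2 = A := by rw [pow_two, hA2]
  have hrankA : A.rank ≤ 1 := by
    calc A.rank = (!![(1:ℂ); 0; 0] * !![(1:ℂ), 2, 3]).rank := by rw [← hfact]
      _ ≤ (!![(1:ℂ); 0; 0]).rank := Matrix.rank_mul_le_left _ _
      _ ≤ 1 := by simpa using Matrix.rank_le_card_width (!![(1:ℂ); 0; 0])
  have hIdx : HasIndex A 1 := by
    constructor
    · rw [hApow, pow_one]
    · intro j hj
      by_contra h
      push_neg at h
      interval_cases j
      rw [pow_one, pow_zero, Matrix.rank_one] at hj
      simp only [Fintype.card_fin] at hj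
      omega
  have hrange : rangeLE X A := by
    have h1 : LinearMap.range X.mulVecLin = LinearMap.range (A * X).mulVecLin := by rw [hAX]
    rw [rangeLE, h1, Matrix.mulVecLin_mul]
    exact LinearMap.range_comp_le_range _ _
  refine ⟨⟨1, X, hIdx, ⟨?_, ?_, ?_, ?_⟩, ?_, ?_⟩, hIdx, ?_, ?_⟩
  · rw [pow_two, pow_one, ← mul_assoc, hXA, hA2]
  · rw [hXA, hAX]
  · rw [hAX, hXH]
  · rwa [pow_one]
  · rw [hXA, hXB]
  · rw [hAX, hBX]
  · intro h
    exact hAB (by rw [h])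
  · rintro ⟨h, -⟩
    rw [pow_one, hApow] at h
    exact hABA (by rw [h])

end CoreEP
end
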